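/- arXiv:0910.4263 — 4 statements merged into one kernel-verified Lean document; each statement's English description precedes it below -/
import Mathlib

section
/- The number of connected (irreducible) pairings c_{2n} of {1,...,2n} satisfies the Riordan recursion c_{2n} = (n-1) · Σ_{i=1}^{n-1} c_{2i} c_{2(n-i)} for n ≥ 2, with c_2 = 1. -/
/-- `P` is a partition of `Fin n`. -/
def IsPartitionOf {n : ℕ} (P : Finset (Finset (Fin n))) : Prop :=
  (∀ B ∈ P, B.Nonempty) ∧ ∀ i : Fin n, ∃! B, B ∈ P ∧ i ∈ B

/-- `P` is a pairing of `Fin n`: a partition all of whose blocks have two elements. -/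
def IsPairingOf {n : ℕ} (P : Finset (Finset (Fin n))) : Prop :=
  IsPartitionOf P ∧ ∀ B ∈ P, B.card = 2

/-- A subinterval of `Fin n`. -/
def IsIntervalSet {n : ℕ} (s : Finset (Fin n)) : Prop :=
  ∃ a b : Fin n, s = Finset.Icc a b

/-- A partition is connected if no proper (nonempty) subinterval is a union of blocks. -/
def IsConnectedPartition {n : ℕ} (P : Finset (Finset (Fin n))) : Prop :=
  ∀ s : Finset (Fin n), IsIntervalSet s → (∀ B ∈ P, B ⊆ s ∨ Disjoint B s) →
    s = ∅ ∨ s = Finset.univ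

/-- The number of connected pairings of `{1,…,2n}`. -/
noncomputable def connPairingCount (n : ℕ) : ℕ :=
  Nat.card {P : Finset (Finset (Fin (2 * n))) // IsPairingOf P ∧ IsConnectedPartition P}

namespace CPR

def Invol {N : ℕ} (σ : Fin N → Fin N) : Prop := ∀ i, σ (σ i) = i ∧ σ i ≠ i

def IsClosedU {N : ℕ} (σ : Fin N → Fin N) (S : Finset (Fin N)) : Prop := ∀ i ∈ S, σ i ∈ S

def IsConvexU {N : ℕ} (S : Finset (Fin N)) : Prop :=
  ∀ i ∈ S, ∀ j ∈ S, ∀ x : Fin N, i ≤ x → x ≤ j → x ∈ S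

def Conn {N : ℕ} (σ : Fin N → Fin N) : Prop :=
  ∀ S : Finset (Fin N), IsConvexU S → IsClosedU σ S → S = ∅ ∨ S = Finset.univ

def CD (n : ℕ) := {σ : Fin (2 * n) → Fin (2 * n) // Invol σ ∧ Conn σ}

instance (n : ℕ) : Finite (CD n) := by unfold CD; infer_instance

section Part1
variable {N : ℕ}

lemma partner_exu {P : Finset (Finset (Fin N))} (hP : IsPairingOf P) (i : Fin N) :
    ∃! j, j ≠ i ∧ {i, j} ∈ P := by
  obtain ⟨B, ⟨hBP, hiB⟩, huniq⟩ := hP.1.2 i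
  obtain ⟨x, y, hxy, hB⟩ := Finset.card_eq_two.mp (hP.2 B hBP)
  have main : ∃ j, j ≠ i ∧ B = {i, j} := by
    subst hB
    simp only [Finset.mem_insert, Finset.mem_singleton] at hiB
    rcases hiB with rfl | rfl
    · exact ⟨y, Ne.symm hxy, rfl⟩
    · exact ⟨x, hxy, Finset.pair_comm x i⟩
  obtain ⟨j, hj, hBij⟩ := main
  refine ⟨j, ⟨hj, hBij ▸ hBP⟩, ?_⟩
  rintro j' ⟨hj', hj'P⟩
  have heq : ({i, j'} : Finset (Fin N)) = B := huniq _ ⟨hj'P, by simp⟩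
  have hjB : j' ∈ B := heq ▸ (by simp : j' ∈ ({i, j'} : Finset (Fin N)))
  rw [hBij] at hjB
  simp only [Finset.mem_insert, Finset.mem_singleton] at hjB
  tauto

noncomputable def partner {P : Finset (Finset (Fin N))} (hP : IsPairingOf P) (i : Fin N) :
    Fin N := (partner_exu hP i).exists.choose

lemma partner_ne {P : Finset (Finset (Fin N))} (hP : IsPairingOf P) (i : Fin N) :
    partner hP i ≠ i := (partner_exu hP i).exists.choose_spec.1

lemma partner_mem {P : Finset (Finset (Fin N))} (hP : IsPairingOf P) (i : Fin N) :
    {i, partner hP i} ∈ P := (partner_exu hP i).exists.choose_spec.2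

lemma block_eq {P : Finset (Finset (Fin N))} (hP : IsPairingOf P) {B : Finset (Fin N)}
    (hB : B ∈ P) {i : Fin N} (hi : i ∈ B) : B = {i, partner hP i} :=
  (hP.1.2 i).unique ⟨hB, hi⟩ ⟨partner_mem hP i, by simp⟩

lemma partner_invol {P : Finset (Finset (Fin N))} (hP : IsPairingOf P) (i : Fin N) :
    partner hP (partner hP i) = i := by
  have h1 := partner_mem hP (partner hP i)
  have h2 : {i, partner hP i} = {partner hP i, partner hP (partner hP i)} :=
    block_eq hP (partner_mem hP i) (by simp)
  have : i ∈ ({partner hP i, partner hP (partner hP i)} : Finset (Fin N)) :=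
    h2 ▸ (by simp)
  simp only [Finset.mem_insert, Finset.mem_singleton] at this
  rcases this with h | h
  · exact absurd h.symm (partner_ne hP i)
  · exact h.symm

lemma partner_conn {P : Finset (Finset (Fin N))} (hP : IsPairingOf P)
    (hC : IsConnectedPartition P) : Conn (partner hP) := by
  intro S hconv hcl
  rcases S.eq_empty_or_nonempty with h | h
  · exact Or.inl h
  refine (hC S ⟨S.min' h, S.max' h, ?_⟩ ?_).imp id id
  · ext x
    simp only [Finset.mem_Icc]
    constructor
    · intro hx; exact ⟨S.min'_le x hx, S.le_max' x hx⟩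
    · rintro ⟨h1, h2⟩
      exact hconv _ (S.min'_mem h) _ (S.max'_mem h) x h1 h2
  · intro B hB
    obtain ⟨i, hi⟩ := hP.1.1 B hB
    rw [block_eq hP hB hi]
    by_cases hiS : i ∈ S
    · left
      intro x hx
      simp only [Finset.mem_insert, Finset.mem_singleton] at hx
      rcases hx with rfl | rfl
      · exact hiS
      · exact hcl i hiS
    · right
      rw [Finset.disjoint_left]
      intro x hx hxS
      simp only [Finset.mem_insert, Finset.mem_singleton] at hx
      rcases hx with rfl | rfl
      · exact hiS hxS
      · exact hiS (partner_invol hP i ▸ hcl _ hxS)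

def toPairing {N : ℕ} (σ : Fin N → Fin N) : Finset (Finset (Fin N)) :=
  Finset.image (fun i => {i, σ i}) Finset.univ

lemma toPairing_isPairing {σ : Fin N → Fin N} (hσ : Invol σ) : IsPairingOf (toPairing σ) := by
  have key : ∀ i : Fin N, ∀ B ∈ toPairing σ, i ∈ B → B = {i, σ i} := by
    intro i B hB hiB
    obtain ⟨j, _, rfl⟩ := Finset.mem_image.mp hB
    simp only [Finset.mem_insert, Finset.mem_singleton] at hiB
    rcases hiB with rfl | rfl
    · rfl
    · rw [(hσ j).1, Finset.pair_comm]
  refine ⟨⟨?_, ?_⟩, ?_⟩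
  · intro B hB
    obtain ⟨j, _, rfl⟩ := Finset.mem_image.mp hB
    exact ⟨j, by simp⟩
  · intro i
    refine ⟨{i, σ i}, ⟨Finset.mem_image.mpr ⟨i, Finset.mem_univ i, rfl⟩, by simp⟩, ?_⟩
    rintro B ⟨hB, hiB⟩
    exact key i B hB hiB
  · intro B hB
    obtain ⟨j, _, rfl⟩ := Finset.mem_image.mp hB
    exact Finset.card_pair (Ne.symm (hσ j).2)

lemma toPairing_conn {σ : Fin N → Fin N} (_hσ : Invol σ) (hc : Conn σ) :
    IsConnectedPartition (toPairing σ) := by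
  intro s hs hblocks
  refine hc s ?_ ?_
  · obtain ⟨a, b, rfl⟩ := hs
    intro i hi j hj x hix hxj
    simp only [Finset.mem_Icc] at *
    exact ⟨le_trans hi.1 hix, le_trans hxj hj.2⟩
  · intro i hi
    have hB : ({i, σ i} : Finset (Fin N)) ∈ toPairing σ :=
      Finset.mem_image.mpr ⟨i, Finset.mem_univ i, rfl⟩
    rcases hblocks _ hB with h | h
    · exact h (by simp)
    · exact absurd hi (Finset.disjoint_left.mp h (by simp))

noncomputable def pairEquiv (N : ℕ) :
    {P : Finset (Finset (Fin N)) // IsPairingOf P ∧ IsConnectedPartition P} ≃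
    {σ : Fin N → Fin N // Invol σ ∧ Conn σ} where
  toFun := fun ⟨P, hP, hC⟩ =>
    ⟨partner hP, fun i => ⟨partner_invol hP i, partner_ne hP i⟩, partner_conn hP hC⟩
  invFun := fun ⟨σ, hσ, hc⟩ => ⟨toPairing σ, toPairing_isPairing hσ, toPairing_conn hσ hc⟩
  left_inv := by
    rintro ⟨P, hP, hC⟩
    apply Subtype.ext
    simp only
    ext B
    constructor
    · intro hB
      obtain ⟨j, _, rfl⟩ := Finset.mem_image.mp hB
      exact partner_mem hP j
    · intro hB
      obtain ⟨i, hi⟩ := hP.1.1 B hB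
      rw [block_eq hP hB hi]
      exact Finset.mem_image.mpr ⟨i, Finset.mem_univ i, rfl⟩
  right_inv := by
    rintro ⟨σ, hσ, hc⟩
    apply Subtype.ext
    simp only
    funext i
    have h1 : ({i, σ i} : Finset (Fin N)) ∈ toPairing σ :=
      Finset.mem_image.mpr ⟨i, Finset.mem_univ i, rfl⟩
    have h2 := partner_mem (toPairing_isPairing hσ) i
    have := (toPairing_isPairing hσ).1.2 i
    have heq : ({i, σ i} : Finset (Fin N)) = {i, partner (toPairing_isPairing hσ) i} :=
      this.unique ⟨h1, by simp⟩ ⟨h2, by simp⟩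
    have hmem : partner (toPairing_isPairing hσ) i ∈ ({i, σ i} : Finset (Fin N)) :=
      heq ▸ (by simp)
    simp only [Finset.mem_insert, Finset.mem_singleton] at hmem
    rcases hmem with h | h
    · exact absurd h (partner_ne (toPairing_isPairing hσ) i)
    · exact h

end Part1

lemma card_CD_one : Nat.card (CD 1) = 1 := by
  rw [Nat.card_eq_one_iff_unique]
  constructor
  · constructor
    rintro ⟨σ, hσ, _⟩ ⟨τ, hτ, _⟩
    apply Subtype.ext
    simp only
    funext i
    apply Fin.ext
    have h1 : (σ i).val < 2 * 1 := (σ i).isLt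
    have h2 : (τ i).val < 2 * 1 := (τ i).isLt
    have h3 : (σ i).val ≠ i.val := fun h => (hσ i).2 (Fin.ext h)
    have h4 : (τ i).val ≠ i.val := fun h => (hτ i).2 (Fin.ext h)
    have h5 : i.val < 2 * 1 := i.isLt
    omega
  · refine ⟨⟨fun i => ⟨1 - i.val, by omega⟩, fun i => ⟨?_, ?_⟩, ?_⟩⟩
    · apply Fin.ext
      simp only
      have : i.val < 2 * 1 := i.isLt
      omega
    · intro h
      have h' := congrArg Fin.val h
      simp only at h'
      have : i.val < 2 * 1 := i.isLt
      omega
    · intro S _hconv hcl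
      rcases S.eq_empty_or_nonempty with h | h
      · exact Or.inl h
      right
      obtain ⟨i, hi⟩ := h
      have hσi := hcl i hi
      apply Finset.eq_univ_of_forall
      intro x
      have hx : x.val = i.val ∨ x.val = 1 - i.val := by
        have := x.isLt; have := i.isLt; omega
      rcases hx with hx | hx
      · rwa [show x = i from Fin.ext hx]
      · rwa [show x = ⟨1 - i.val, by have := i.isLt; omega⟩ from Fin.ext hx]

/-! ### Part 2: the insertion bijection -/

def MemT (l r a x : ℕ) : Prop := l ≤ x ∧ x ≤ r ∧ x ≠ a

instance (l r a x : ℕ) : Decidable (MemT l r a x) := by unfold MemT; infer_instance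

def e1 (A t q : ℕ) : ℕ := if q < t then A + q else A + 1 + q
def e2 (A t k p : ℕ) : ℕ := if p < A then p else if p = A then A + t else p + 2 * k
def d1 (A t x : ℕ) : ℕ := if x < A + t then x - A else x - A - 1
def d2 (A t k x : ℕ) : ℕ := if x < A then x else if x = A + t then A else x - 2 * k

def gmap (A t k : ℕ) (s1 s2 : ℕ → ℕ) (x : ℕ) : ℕ :=
  if MemT A (A + 2 * k) (A + t) x then e1 A t (s1 (d1 A t x))
  else e2 A t k (s2 (d2 A t k x))

section maps

variable {A t k j : ℕ}

lemma e1_mem (ht1 : 1 ≤ t) (ht2 : t ≤ 2 * k - 1) (hk : 1 ≤ k) {q : ℕ} (hq : q < 2 * k) :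
    MemT A (A + 2 * k) (A + t) (e1 A t q) := by
  unfold MemT e1; split_ifs <;> omega

lemma e2_not_mem (hA : 1 ≤ A) (ht1 : 1 ≤ t) (ht2 : t ≤ 2 * k - 1) (hk : 1 ≤ k)
    {p : ℕ} (_hp : p < 2 * j) : ¬ MemT A (A + 2 * k) (A + t) (e2 A t k p) := by
  unfold MemT e2; split_ifs <;> omega

lemma e2_lt (hA2 : A ≤ 2 * j - 1) (hj : 1 ≤ j) (ht2 : t ≤ 2 * k - 1) (hk : 1 ≤ k)
    {p : ℕ} (hp : p < 2 * j) :
    e2 A t k p < 2 * (k + j) := by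
  unfold e2; split_ifs <;> omega

lemma e1_lt (hA2 : A ≤ 2 * j - 1) (hj : 1 ≤ j) {q : ℕ} (hq : q < 2 * k) :
    e1 A t q < 2 * (k + j) := by
  unfold e1; split_ifs <;> omega

lemma d1_e1 {q : ℕ} (_hq : q < 2 * k) : d1 A t (e1 A t q) = q := by
  unfold d1 e1; split_ifs <;> omega

lemma d2_e2 (ht1 : 1 ≤ t) (ht2 : t ≤ 2 * k - 1) (hk : 1 ≤ k) {p : ℕ} (_hp : p < 2 * j) :
    d2 A t k (e2 A t k p) = p := by
  unfold d2 e2; split_ifs <;> omega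

lemma e1_d1 {x : ℕ} (hx : MemT A (A + 2 * k) (A + t) x) : e1 A t (d1 A t x) = x := by
  unfold MemT at hx; unfold e1 d1; split_ifs <;> omega

lemma e2_d2 (ht1 : 1 ≤ t) (ht2 : t ≤ 2 * k - 1) {x : ℕ}
    (hx : ¬ MemT A (A + 2 * k) (A + t) x) (hxN : x < 2 * (k + j)) :
    e2 A t k (d2 A t k x) = x := by
  unfold MemT at hx; push_neg at hx; unfold e2 d2; split_ifs <;> omega

lemma d1_lt (ht1 : 1 ≤ t) (ht2 : t ≤ 2 * k - 1) {x : ℕ}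
    (hx : MemT A (A + 2 * k) (A + t) x) : d1 A t x < 2 * k := by
  unfold MemT at hx; unfold d1; split_ifs <;> omega

lemma d2_lt (hA1 : 1 ≤ A) (hA2 : A ≤ 2 * j - 1) (ht2 : t ≤ 2 * k - 1) (hk : 1 ≤ k) {x : ℕ}
    (hx : ¬ MemT A (A + 2 * k) (A + t) x) (hxN : x < 2 * (k + j)) :
    d2 A t k x < 2 * j := by
  unfold MemT at hx; push_neg at hx; unfold d2; split_ifs <;> omega

lemma e1_mono {q q' : ℕ} (h : q ≤ q') : e1 A t q ≤ e1 A t q' := by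
  unfold e1; split_ifs <;> omega

lemma e1_strict_mono {q q' : ℕ} (h : q < q') : e1 A t q < e1 A t q' := by
  unfold e1; split_ifs <;> omega

lemma e2_mono {p p' : ℕ} (hA2 : A ≤ 2 * j - 1) (ht2 : t ≤ 2 * k - 1)
    (hp' : p' < 2 * j) (h : p ≤ p') : e2 A t k p ≤ e2 A t k p' := by
  unfold e2; split_ifs <;> omega

lemma e2_strict_mono {p p' : ℕ} (ht1 : 1 ≤ t) (ht2 : t ≤ 2 * k - 1) (h : p < p') :
    e2 A t k p < e2 A t k p' := by
  unfold e2; split_ifs <;> omega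

lemma e1_zero (ht1 : 1 ≤ t) : e1 A t 0 = A := by unfold e1; split_ifs <;> omega
lemma e1_last (ht2 : t ≤ 2 * k - 1) (hk : 1 ≤ k) : e1 A t (2 * k - 1) = A + 2 * k := by
  unfold e1; split_ifs <;> omega
lemma e2_zero (hA1 : 1 ≤ A) : e2 A t k 0 = 0 := by unfold e2; split_ifs <;> omega
lemma e2_A : e2 A t k A = A + t := by unfold e2; split_ifs <;> omega

end maps

/-- a finset closed under a fixed-point-free involution has even cardinality -/
lemma even_card_invol {N : ℕ} (g : Fin N → Fin N) (hg : Invol g) :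
    ∀ S : Finset (Fin N), IsClosedU g S → Even S.card := by
  intro S
  induction S using Finset.strongInduction with
  | _ S ih =>
    intro hcl
    rcases S.eq_empty_or_nonempty with rfl | ⟨x, hx⟩
    · simp
    have hgx : g x ∈ S := hcl x hx
    have hne : g x ≠ x := (hg x).2
    set S' := (S.erase x).erase (g x) with hS'
    have hsub : S' ⊂ S := by
      apply Finset.ssubset_of_subset_of_ssubset
      · exact Finset.erase_subset _ _
      · exact Finset.erase_ssubset hx
    have hcl' : IsClosedU g S' := by
      intro y hy
      simp only [hS', Finset.mem_erase] at hy ⊢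
      refine ⟨?_, ?_, hcl y hy.2.2⟩
      · intro h
        have h2 := congrArg g h
        rw [(hg y).1, (hg x).1] at h2
        exact hy.2.1 h2
      · intro h
        have h2 := congrArg g h
        rw [(hg y).1] at h2
        exact hy.1 h2
    have hcard : S.card = S'.card + 2 := by
      rw [hS', Finset.card_erase_of_mem (Finset.mem_erase.mpr ⟨hne, hgx⟩),
        Finset.card_erase_of_mem hx]
      have h2 : 2 ≤ S.card := by
        have : ({g x, x} : Finset (Fin N)) ⊆ S := by
          intro z hz; simp only [Finset.mem_insert, Finset.mem_singleton] at hz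
          rcases hz with rfl | rfl <;> assumption
        calc 2 = ({g x, x} : Finset (Fin N)).card := (Finset.card_pair hne).symm
        _ ≤ S.card := Finset.card_le_card this
      omega
    rw [hcard]
    obtain ⟨c, hc⟩ := ih S' hsub hcl'
    exact ⟨c + 1, by omega⟩

/-- `(l, r)` form a pre-cut: basic bounds plus closure of `T = [l,r] \ {a}`. -/
def PreCut (N : ℕ) (g : Fin N → Fin N) (a l r : ℕ) : Prop :=
  1 ≤ l ∧ l < a ∧ a < r ∧ r ≤ N - 1 ∧
  ∀ x : Fin N, MemT l r a x.val → MemT l r a (g x).val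

/-- a valid cut additionally requires relative connectivity of the inserted part -/
def ValidCut (N : ℕ) (g : Fin N → Fin N) (a l r : ℕ) : Prop :=
  PreCut N g a l r ∧
  ∀ S : Finset (Fin N), (∀ x ∈ S, MemT l r a x.val) →
    (∀ i ∈ S, ∀ jj ∈ S, ∀ x : Fin N, i ≤ x → x ≤ jj → MemT l r a x.val → x ∈ S) →
    IsClosedU g S → S = ∅ ∨ ∀ x : Fin N, MemT l r a x.val → x ∈ S


lemma notMemT_iff {l r a x : ℕ} : ¬ MemT l r a x ↔ (x < l ∨ r < x ∨ x = a) := by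
  unfold MemT; omega

lemma invol_inj {N : ℕ} {g : Fin N → Fin N} (hg : Invol g) {x y : Fin N}
    (h : g x = g y) : x = y := by
  have h2 := congrArg g h
  rwa [(hg x).1, (hg y).1] at h2

lemma g0_bounds {N : ℕ} {g : Fin N → Fin N} (hg : Invol g) (hc : Conn g) (hN : 3 < N)
    (hN0 : 0 < N) : 2 ≤ (g ⟨0, hN0⟩).val ∧ (g ⟨0, hN0⟩).val ≤ N - 2 := by
  set a := (g ⟨0, hN0⟩).val with ha
  have haN : a < N := (g ⟨0, hN0⟩).isLt
  have ha0 : a ≠ 0 := by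
    intro h
    have h0 : (⟨0, hN0⟩ : Fin N).val = 0 := rfl
    exact (hg ⟨0, hN0⟩).2 (Fin.ext (by omega))
  have ha1 : a ≠ 1 := by
    intro h
    have hg0 : g ⟨0, hN0⟩ = ⟨1, by omega⟩ := Fin.ext (by
      have h1 : (⟨1, show 1 < N by omega⟩ : Fin N).val = 1 := rfl
      omega)
    set S : Finset (Fin N) := {⟨0, hN0⟩, ⟨1, by omega⟩} with hS
    have hmem : ∀ x : Fin N, x ∈ S ↔ x.val ≤ 1 := by
      intro x
      simp only [hS, Finset.mem_insert, Finset.mem_singleton]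
      constructor
      · rintro (rfl | rfl) <;> simp
      · intro hx
        rcases Nat.le_one_iff_eq_zero_or_eq_one.mp hx with h' | h'
        · exact Or.inl (Fin.ext h')
        · exact Or.inr (Fin.ext h')
    have hSconv : IsConvexU S := by
      intro i hi jj hjj x hix hxj
      rw [hmem] at hi hjj ⊢
      have := Fin.le_def.mp hxj
      omega
    have hScl : IsClosedU g S := by
      intro x hx
      rw [hmem] at hx
      rcases Nat.le_one_iff_eq_zero_or_eq_one.mp hx with h' | h'
      · have hx0 : x = ⟨0, hN0⟩ := Fin.ext h'
        rw [hx0, hg0, hmem]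
      · have hx1 : x = ⟨1, by omega⟩ := Fin.ext h'
        have hg1 : g ⟨1, by omega⟩ = ⟨0, hN0⟩ := by
          rw [← hg0, (hg _).1]
        rw [hx1, hg1, hmem]
        exact Nat.zero_le 1
    rcases hc S hSconv hScl with h' | h'
    · have hin : (⟨0, hN0⟩ : Fin N) ∈ S := by simp [hS]
      rw [h'] at hin
      exact absurd hin (Finset.notMem_empty _)
    · have h2' : (⟨2, by omega⟩ : Fin N) ∈ S := Finset.eq_univ_iff_forall.mp h' _
      rw [hmem] at h2'
      have h2v : (⟨2, show 2 < N by omega⟩ : Fin N).val = 2 := rfl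
      omega
  have haN1 : a ≠ N - 1 := by
    intro h
    have hg0 : g ⟨0, hN0⟩ = ⟨N - 1, by omega⟩ := Fin.ext (by
      have h1 : (⟨N - 1, show N - 1 < N by omega⟩ : Fin N).val = N - 1 := rfl
      omega)
    set S : Finset (Fin N) := Finset.univ.filter (fun x => 1 ≤ x.val ∧ x.val ≤ N - 2) with hS
    have hmem : ∀ x : Fin N, x ∈ S ↔ (1 ≤ x.val ∧ x.val ≤ N - 2) := by
      intro x; simp [hS]
    have hSconv : IsConvexU S := by
      intro i hi jj hjj x hix hxj
      rw [hmem] at hi hjj ⊢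
      have h1 := Fin.le_def.mp hix
      have h2 := Fin.le_def.mp hxj
      omega
    have hScl : IsClosedU g S := by
      intro x hx
      rw [hmem] at hx ⊢
      have hlt : (g x).val < N := (g x).isLt
      constructor
      · rcases Nat.eq_zero_or_pos (g x).val with h' | h'
        · exfalso
          have hgx0 : g x = ⟨0, hN0⟩ := Fin.ext h'
          have hxg : x = g ⟨0, hN0⟩ := by rw [← hgx0, (hg x).1]
          rw [hg0] at hxg
          rw [hxg] at hx
          simp only [Fin.val_mk] at hx
          omega
        · exact h'
      · by_contra h'
        have hval : (g x).val = N - 1 := by omega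
        have hgg : g x = g ⟨0, hN0⟩ := by
          rw [hg0]; exact Fin.ext (by
            have : (⟨N - 1, show N - 1 < N by omega⟩ : Fin N).val = N - 1 := rfl
            omega)
        have := invol_inj hg hgg
        rw [this] at hx
        simp only [Fin.val_mk] at hx
        omega
    rcases hc S hSconv hScl with h' | h'
    · have h1' : (⟨1, by omega⟩ : Fin N) ∈ S := by
        rw [hmem]
        have h1v : (⟨1, show 1 < N by omega⟩ : Fin N).val = 1 := rfl
        omega
      rw [h'] at h1'
      exact absurd h1' (Finset.notMem_empty _)
    · have h0' : (⟨0, hN0⟩ : Fin N) ∈ S := Finset.eq_univ_iff_forall.mp h' _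
      rw [hmem] at h0'
      have h0v : (⟨0, hN0⟩ : Fin N).val = 0 := rfl
      omega
  omega

lemma cut_c2conn {N : ℕ} {g : Fin N → Fin N} (hg : Invol g) (hc : Conn g) {a l r : ℕ}
    (hN0 : 0 < N) (ha : (g ⟨0, hN0⟩).val = a) (ha2 : 2 ≤ a)
    (hpc : PreCut N g a l r) :
    ∀ S : Finset (Fin N), (∀ x ∈ S, ¬ MemT l r a x.val) →
      (∀ i ∈ S, ∀ jj ∈ S, ∀ x : Fin N, i ≤ x → x ≤ jj → ¬ MemT l r a x.val → x ∈ S) →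
      IsClosedU g S → S = ∅ ∨ ∀ x : Fin N, ¬ MemT l r a x.val → x ∈ S := by
  obtain ⟨hl1, hla, har, hrN, hclo⟩ := hpc
  intro S hsub hconv hcl
  rcases S.eq_empty_or_nonempty with rfl | hne
  · exact Or.inl rfl
  right
  set u := S.min' hne with hu
  set v := S.max' hne with hv
  have huS : u ∈ S := S.min'_mem hne
  have hvS : v ∈ S := S.max'_mem hne
  have huv : u.val ≤ v.val := Fin.le_def.mp (S.min'_le v hvS)
  have hut := notMemT_iff.mp (hsub u huS)
  have hvt := notMemT_iff.mp (hsub v hvS)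
  have haN : a < N := by omega
  have hga : g ⟨a, haN⟩ = ⟨0, hN0⟩ := by
    have h1 : (⟨a, haN⟩ : Fin N) = g ⟨0, hN0⟩ := Fin.ext (by
      have h2 : (⟨a, haN⟩ : Fin N).val = a := rfl
      omega)
    rw [h1, (hg _).1]
  -- if a ∈ S then 0 ∈ S hence u.val = 0
  have hain : (⟨a, haN⟩ : Fin N) ∈ S → u.val = 0 := by
    intro hmem
    have h0 : (⟨0, hN0⟩ : Fin N) ∈ S := hga ▸ hcl _ hmem
    have h1 := Fin.le_def.mp (S.min'_le _ h0)
    have h0v : (⟨0, hN0⟩ : Fin N).val = 0 := rfl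
    omega
  -- main case analysis
  rcases hut with hu1 | hu1 | hu1
  · -- u.val < l
    rcases hvt with hv1 | hv1 | hv1
    · -- both < l : S is globally convex, contradiction
      exfalso
      have hSconv : IsConvexU S := by
        intro i hi jj hjj x hix hxj
        refine hconv i hi jj hjj x hix hxj (notMemT_iff.mpr ?_)
        have h1 := Fin.le_def.mp hxj
        have h2 := Fin.le_def.mp (S.le_max' jj hjj)
        omega
      rcases hc S hSconv hcl with h' | h'
      · exact absurd h' (Finset.nonempty_iff_ne_empty.mp hne)
      · have hl' : (⟨l, by omega⟩ : Fin N) ∈ S := Finset.eq_univ_iff_forall.mp h' _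
        have h2 := notMemT_iff.mp (hsub _ hl')
        have hlv : (⟨l, show l < N by omega⟩ : Fin N).val = l := rfl
        omega
    · -- u < l, v > r
      have hScont : ∀ x : Fin N, ¬ MemT l r a x.val → u.val ≤ x.val → x.val ≤ v.val → x ∈ S := by
        intro x hx h1 h2
        exact hconv u huS v hvS x (Fin.le_def.mpr h1) (Fin.le_def.mpr h2) hx
      set W := S ∪ Finset.univ.filter (fun x : Fin N => MemT l r a x.val) with hW
      have hWmem : ∀ x : Fin N, x ∈ W ↔ (x ∈ S ∨ MemT l r a x.val) := by
        intro x; simp [hW]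
      have hWconv : IsConvexU W := by
        intro i hi jj hjj x hix hxj
        rw [hWmem] at hi hjj ⊢
        have h1 := Fin.le_def.mp hix
        have h2 := Fin.le_def.mp hxj
        by_cases hmx : MemT l r a x.val
        · exact Or.inr hmx
        · left
          apply hScont x hmx
          · rcases hi with hi | hi
            · have := Fin.le_def.mp (S.min'_le i hi); omega
            · unfold MemT at hmx hi; omega
          · rcases hjj with hj | hj
            · have := Fin.le_def.mp (S.le_max' jj hj); omega
            · unfold MemT at hmx hj; omega
      have hWcl : IsClosedU g W := by
        intro x hx
        rw [hWmem] at hx ⊢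
        rcases hx with hx | hx
        · exact Or.inl (hcl x hx)
        · exact Or.inr (hclo x hx)
      rcases hc W hWconv hWcl with h' | h'
      · exfalso
        have : u ∈ W := by rw [hWmem]; exact Or.inl huS
        rw [h'] at this
        exact absurd this (Finset.notMem_empty _)
      · -- W = univ ⇒ u.val = 0 and v.val = N - 1
        have h0W : (⟨0, hN0⟩ : Fin N) ∈ W := Finset.eq_univ_iff_forall.mp h' _
        have hNW : (⟨N - 1, by omega⟩ : Fin N) ∈ W := Finset.eq_univ_iff_forall.mp h' _
        rw [hWmem] at h0W hNW
        have h0v : (⟨0, hN0⟩ : Fin N).val = 0 := rfl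
        have hNv : (⟨N - 1, show N - 1 < N by omega⟩ : Fin N).val = N - 1 := rfl
        have h0S : (⟨0, hN0⟩ : Fin N) ∈ S := by
          rcases h0W with h | h
          · exact h
          · exfalso; unfold MemT at h; omega
        have hNS : (⟨N - 1, by omega⟩ : Fin N) ∈ S := by
          rcases hNW with h | h
          · exact h
          · exfalso; unfold MemT at h; omega
        have hu0 : u.val = 0 := by
          have := Fin.le_def.mp (S.min'_le _ h0S); omega
        have hvN : v.val = N - 1 := by
          have := Fin.le_def.mp (S.le_max' _ hNS); omega
        intro x hx
        exact hScont x hx (by omega) (by have := x.isLt; omega)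
    · -- u < l, v.val = a
      have hvA : v = ⟨a, haN⟩ := Fin.ext hv1
      have hu0 : u.val = 0 := hain (hvA ▸ hvS)
      have hScont : ∀ x : Fin N, ¬ MemT l r a x.val → x.val ≤ a → x ∈ S := by
        intro x hx h2
        exact hconv u huS v hvS x (Fin.le_def.mpr (by omega)) (Fin.le_def.mpr (by omega)) hx
      set W := S ∪ Finset.univ.filter (fun x : Fin N => MemT l r a x.val) with hW
      have hWmem : ∀ x : Fin N, x ∈ W ↔ (x ∈ S ∨ MemT l r a x.val) := by
        intro x; simp [hW]
      have hWconv : IsConvexU W := by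
        intro i hi jj hjj x hix hxj
        rw [hWmem] at hi hjj ⊢
        have h2 := Fin.le_def.mp hxj
        by_cases hmx : MemT l r a x.val
        · exact Or.inr hmx
        · left
          apply hScont x hmx
          rcases hjj with hj | hj
          · have h3 := Fin.le_def.mp (S.le_max' jj hj)
            have h4 := notMemT_iff.mp hmx
            have h5 := notMemT_iff.mp (hsub jj hj)
            omega
          · unfold MemT at hmx hj; omega
      have hWcl : IsClosedU g W := by
        intro x hx
        rw [hWmem] at hx ⊢
        rcases hx with hx | hx
        · exact Or.inl (hcl x hx)
        · exact Or.inr (hclo x hx)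
      rcases hc W hWconv hWcl with h' | h'
      · exfalso
        have : u ∈ W := by rw [hWmem]; exact Or.inl huS
        rw [h'] at this
        exact absurd this (Finset.notMem_empty _)
      · have hNW : (⟨N - 1, by omega⟩ : Fin N) ∈ W := Finset.eq_univ_iff_forall.mp h' _
        rw [hWmem] at hNW
        have hNv : (⟨N - 1, show N - 1 < N by omega⟩ : Fin N).val = N - 1 := rfl
        have hrN1 : r = N - 1 := by
          rcases hNW with h | h
          · exfalso
            have h1 := notMemT_iff.mp (hsub _ h)
            have h2 := Fin.le_def.mp (S.le_max' _ h)
            omega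
          · unfold MemT at h; omega
        intro x hx
        have := notMemT_iff.mp hx
        have := x.isLt
        exact hScont x hx (by omega)
  · -- u.val > r : everything in S is above r
    exfalso
    have hSconv : IsConvexU S := by
      intro i hi jj hjj x hix hxj
      refine hconv i hi jj hjj x hix hxj (notMemT_iff.mpr ?_)
      have h1 := Fin.le_def.mp hix
      have h2 := Fin.le_def.mp (S.min'_le i hi)
      omega
    rcases hc S hSconv hcl with h' | h'
    · exact absurd h' (Finset.nonempty_iff_ne_empty.mp hne)
    · have hl' : (⟨l, by omega⟩ : Fin N) ∈ S := Finset.eq_univ_iff_forall.mp h' _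
      have h2 := notMemT_iff.mp (hsub _ hl')
      have hlv : (⟨l, show l < N by omega⟩ : Fin N).val = l := rfl
      omega
  · -- u.val = a : then 0 ∈ S, so u.val = 0 ≠ a, contradiction
    exfalso
    have huA : u = ⟨a, haN⟩ := Fin.ext hu1
    have := hain (huA ▸ huS)
    omega


lemma cut_unique {N : ℕ} {g : Fin N → Fin N} {a l r l' r' : ℕ}
    (h1 : ValidCut N g a l r) (h2 : ValidCut N g a l' r') : l = l' ∧ r = r' := by
  obtain ⟨⟨hl1, hla, har, hrN, hclo⟩, hC1⟩ := h1
  obtain ⟨⟨hl1', hla', har', hrN', hclo'⟩, hC1'⟩ := h2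
  have hNbig : max l l' < N := by omega
  set S : Finset (Fin N) :=
    Finset.univ.filter (fun x => MemT l r a x.val ∧ MemT l' r' a x.val) with hS
  have hmem : ∀ x : Fin N, x ∈ S ↔ (MemT l r a x.val ∧ MemT l' r' a x.val) := by
    intro x; simp [hS]
  have hwit : (⟨max l l', hNbig⟩ : Fin N) ∈ S := by
    rw [hmem]
    have hmv : (⟨max l l', hNbig⟩ : Fin N).val = max l l' := rfl
    unfold MemT
    omega
  have hne : S ≠ ∅ := fun h => absurd (h ▸ hwit) (Finset.notMem_empty _)
  have hsub1 : ∀ x ∈ S, MemT l r a x.val := fun x hx => ((hmem x).mp hx).1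
  have hsub2 : ∀ x ∈ S, MemT l' r' a x.val := fun x hx => ((hmem x).mp hx).2
  have hconv1 : ∀ i ∈ S, ∀ jj ∈ S, ∀ x : Fin N, i ≤ x → x ≤ jj → MemT l r a x.val → x ∈ S := by
    intro i hi jj hjj x hix hxj hmx
    rw [hmem] at hi hjj ⊢
    have hxi := Fin.le_def.mp hix
    have hxjj := Fin.le_def.mp hxj
    unfold MemT at hi hjj hmx ⊢
    omega
  have hconv2 : ∀ i ∈ S, ∀ jj ∈ S, ∀ x : Fin N, i ≤ x → x ≤ jj → MemT l' r' a x.val → x ∈ S := by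
    intro i hi jj hjj x hix hxj hmx
    rw [hmem] at hi hjj ⊢
    have hxi := Fin.le_def.mp hix
    have hxjj := Fin.le_def.mp hxj
    unfold MemT at hi hjj hmx ⊢
    omega
  have hScl : IsClosedU g S := by
    intro x hx
    rw [hmem] at hx ⊢
    exact ⟨hclo x hx.1, hclo' x hx.2⟩
  have hT1 : ∀ x : Fin N, MemT l r a x.val → x ∈ S := by
    rcases hC1 S hsub1 hconv1 hScl with h | h
    · exact absurd h hne
    · exact h
  have hT2 : ∀ x : Fin N, MemT l' r' a x.val → x ∈ S := by
    rcases hC1' S hsub2 hconv2 hScl with h | h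
    · exact absurd h hne
    · exact h
  have hlN : l < N := by omega
  have hrN2 : r < N := by omega
  have hlN' : l' < N := by omega
  have hrN2' : r' < N := by omega
  have e1 : MemT l' r' a l := by
    have := hsub2 _ (hT1 ⟨l, hlN⟩ (show MemT l r a l by unfold MemT; omega))
    exact this
  have e2 : MemT l r a l' := by
    have := hsub1 _ (hT2 ⟨l', hlN'⟩ (show MemT l' r' a l' by unfold MemT; omega))
    exact this
  have e3 : MemT l' r' a r := by
    have := hsub2 _ (hT1 ⟨r, hrN2⟩ (show MemT l r a r by unfold MemT; omega))
    exact this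
  have e4 : MemT l r a r' := by
    have := hsub1 _ (hT2 ⟨r', hrN2'⟩ (show MemT l' r' a r' by unfold MemT; omega))
    exact this
  unfold MemT at e1 e2 e3 e4
  exact ⟨by omega, by omega⟩

lemma cut_exists {N : ℕ} {g : Fin N → Fin N} (hg : Invol g) (hc : Conn g) (hN : 3 < N)
    {a : ℕ} (ha : (g ⟨0, by omega⟩).val = a) : ∃ l r, ValidCut N g a l r := by
  have hN0 : 0 < N := by omega
  have hab := g0_bounds hg hc hN hN0
  rw [ha] at hab
  have main : ∀ d l r, PreCut N g a l r → r - l ≤ d → ∃ l' r', ValidCut N g a l' r' := by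
    intro d
    induction d with
    | zero =>
      intro l r hpc hle
      obtain ⟨hl1, hla, har, _, _⟩ := hpc
      omega
    | succ d ih =>
      intro l r hpc hle
      by_cases hval : ∀ S : Finset (Fin N), (∀ x ∈ S, MemT l r a x.val) →
          (∀ i ∈ S, ∀ jj ∈ S, ∀ x : Fin N, i ≤ x → x ≤ jj → MemT l r a x.val → x ∈ S) →
          IsClosedU g S → S = ∅ ∨ ∀ x : Fin N, MemT l r a x.val → x ∈ S
      · exact ⟨l, r, hpc, hval⟩
      push_neg at hval
      obtain ⟨S, hsub, hconv, hcl, hS1, x0, hx0, hx0S⟩ := hval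
      obtain ⟨hl1, hla, har, hrN, hclo⟩ := hpc
      have hne : S.Nonempty := hS1
      set u := S.min' hne with hu
      set v := S.max' hne with hv
      have huS : u ∈ S := S.min'_mem hne
      have hvS : v ∈ S := S.max'_mem hne
      have hut : MemT l r a u.val := hsub u huS
      have hvt : MemT l r a v.val := hsub v hvS
      by_cases hmid : u.val < a ∧ a < v.val
      · -- (u.val, v.val) is a smaller precut
        have hpre2 : PreCut N g a u.val v.val := by
          refine ⟨?_, hmid.1, hmid.2, ?_, ?_⟩
          · unfold MemT at hut; omega
          · unfold MemT at hvt; omega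
          · intro x hx
            have hxS : x ∈ S := by
              apply hconv u huS v hvS x
              · exact Fin.le_def.mpr (by unfold MemT at hx; omega)
              · exact Fin.le_def.mpr (by unfold MemT at hx; omega)
              · unfold MemT at hx hut hvt ⊢; omega
            have h1 := Fin.le_def.mp (S.min'_le _ (hcl x hxS))
            have h2 := Fin.le_def.mp (S.le_max' _ (hcl x hxS))
            have h3 := hsub _ (hcl x hxS)
            unfold MemT at h3 ⊢
            omega
        by_cases heq : u.val = l ∧ v.val = r
        · -- then S contains all of T, contradicting hx0S
          exfalso
          apply hx0S
          apply hconv u huS v hvS x0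
          · exact Fin.le_def.mpr (by unfold MemT at hx0; omega)
          · exact Fin.le_def.mpr (by unfold MemT at hx0; omega)
          · exact hx0
        · apply ih u.val v.val hpre2
          unfold MemT at hut hvt
          omega
      · -- S lies on one side of a : contradiction with global connectivity
        exfalso
        have hside : a < u.val ∨ v.val < a := by
          unfold MemT at hut hvt
          omega
        have hSconv : IsConvexU S := by
          intro i hi jj hjj x hix hxj
          apply hconv i hi jj hjj x hix hxj
          have h1 := Fin.le_def.mp hix
          have h2 := Fin.le_def.mp hxj
          have h3 := hsub i hi
          have h4 := hsub jj hjj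
          have h5 := Fin.le_def.mp (S.min'_le i hi)
          have h6 := Fin.le_def.mp (S.le_max' jj hjj)
          unfold MemT at h3 h4 ⊢
          omega
        rcases hc S hSconv hcl with h' | h'
        · exact absurd h' (Finset.nonempty_iff_ne_empty.mp hS1)
        · have haS : (⟨a, by omega⟩ : Fin N) ∈ S := Finset.eq_univ_iff_forall.mp h' _
          have := hsub _ haS
          unfold MemT at this
          have hav : (⟨a, show a < N by omega⟩ : Fin N).val = a := rfl
          omega
  -- the outermost precut
  apply main N 1 (N - 1)
  · refine ⟨le_refl 1, by omega, by omega, le_refl _, ?_⟩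
    intro x hx
    unfold MemT at hx ⊢
    have h1 : (g x).val < N := (g x).isLt
    have h2 : (g x).val ≠ 0 := by
      intro h0
      have hgx : g x = ⟨0, hN0⟩ := Fin.ext h0
      have : x = g ⟨0, hN0⟩ := by rw [← hgx, (hg x).1]
      have hxa : x.val = a := by rw [this]; exact ha
      omega
    have h3 : (g x).val ≠ a := by
      intro hgxa
      have hgx : g x = g ⟨0, hN0⟩ := by
        apply Fin.ext
        rw [hgxa, ha]
      have := invol_inj hg hgx
      have hx0 : x.val = 0 := by rw [this]
      omega
    omega
  · omega


/-- hypothesis bundle for the insertion construction -/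
structure Hyp (k j A t : ℕ) (s1 s2 : ℕ → ℕ) : Prop where
  hk : 1 ≤ k
  hj : 1 ≤ j
  ht1 : 1 ≤ t
  ht2 : t ≤ 2 * k - 1
  hA1 : 1 ≤ A
  hA2 : A ≤ 2 * j - 1
  hs1b : ∀ q, q < 2 * k → s1 q < 2 * k
  hs1i : ∀ q, q < 2 * k → s1 (s1 q) = q
  hs1n : ∀ q, q < 2 * k → s1 q ≠ q
  hs2b : ∀ p, p < 2 * j → s2 p < 2 * j
  hs2i : ∀ p, p < 2 * j → s2 (s2 p) = p
  hs2n : ∀ p, p < 2 * j → s2 p ≠ p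
  hs20 : s2 0 = A

section construct

variable {k j A t : ℕ} {s1 s2 : ℕ → ℕ}

lemma gmap_e1 (h : Hyp k j A t s1 s2) {q : ℕ} (hq : q < 2 * k) :
    gmap A t k s1 s2 (e1 A t q) = e1 A t (s1 q) := by
  unfold gmap
  rw [if_pos (e1_mem h.ht1 h.ht2 h.hk hq), d1_e1 hq]

lemma gmap_e2 (h : Hyp k j A t s1 s2) {p : ℕ} (hp : p < 2 * j) :
    gmap A t k s1 s2 (e2 A t k p) = e2 A t k (s2 p) := by
  unfold gmap
  rw [if_neg (e2_not_mem h.hA1 h.ht1 h.ht2 h.hk hp), d2_e2 h.ht1 h.ht2 h.hk hp]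

lemma gmap_lt (h : Hyp k j A t s1 s2) {x : ℕ} (hx : x < 2 * (k + j)) :
    gmap A t k s1 s2 x < 2 * (k + j) := by
  unfold gmap
  by_cases hm : MemT A (A + 2 * k) (A + t) x
  · rw [if_pos hm]
    exact e1_lt h.hA2 h.hj (h.hs1b _ (d1_lt h.ht1 h.ht2 hm))
  · rw [if_neg hm]
    exact e2_lt h.hA2 h.hj h.ht2 h.hk (h.hs2b _ (d2_lt h.hA1 h.hA2 h.ht2 h.hk hm hx))

lemma gmap_invol (h : Hyp k j A t s1 s2) {x : ℕ} (hx : x < 2 * (k + j)) :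
    gmap A t k s1 s2 (gmap A t k s1 s2 x) = x := by
  by_cases hm : MemT A (A + 2 * k) (A + t) x
  · have hd : d1 A t x < 2 * k := d1_lt h.ht1 h.ht2 hm
    have h1 : gmap A t k s1 s2 x = e1 A t (s1 (d1 A t x)) := by
      unfold gmap; rw [if_pos hm]
    rw [h1, gmap_e1 h (h.hs1b _ hd), h.hs1i _ hd, e1_d1 hm]
  · have hd : d2 A t k x < 2 * j := d2_lt h.hA1 h.hA2 h.ht2 h.hk hm hx
    have h1 : gmap A t k s1 s2 x = e2 A t k (s2 (d2 A t k x)) := by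
      unfold gmap; rw [if_neg hm]
    rw [h1, gmap_e2 h (h.hs2b _ hd), h.hs2i _ hd, e2_d2 h.ht1 h.ht2 hm hx]

lemma gmap_ne (h : Hyp k j A t s1 s2) {x : ℕ} (hx : x < 2 * (k + j)) :
    gmap A t k s1 s2 x ≠ x := by
  by_cases hm : MemT A (A + 2 * k) (A + t) x
  · have hd : d1 A t x < 2 * k := d1_lt h.ht1 h.ht2 hm
    have h1 : gmap A t k s1 s2 x = e1 A t (s1 (d1 A t x)) := by
      unfold gmap; rw [if_pos hm]
    rw [h1]
    intro heq
    have h2 := congrArg (d1 A t) heq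
    rw [d1_e1 (h.hs1b _ hd)] at h2
    exact h.hs1n _ hd h2
  · have hd : d2 A t k x < 2 * j := d2_lt h.hA1 h.hA2 h.ht2 h.hk hm hx
    have h1 : gmap A t k s1 s2 x = e2 A t k (s2 (d2 A t k x)) := by
      unfold gmap; rw [if_neg hm]
    rw [h1]
    intro heq
    have h2 := congrArg (d2 A t k) heq
    rw [d2_e2 h.ht1 h.ht2 h.hk (h.hs2b _ hd)] at h2
    have h3 := e2_d2 (A := A) (j := j) h.ht1 h.ht2 hm hx
    have h4 : d2 A t k (e2 A t k (d2 A t k x)) = d2 A t k x :=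
      d2_e2 h.ht1 h.ht2 h.hk hd
    rw [h3] at h4
    rw [h4] at h2
    exact h.hs2n _ hd h2

lemma gmap_zero (h : Hyp k j A t s1 s2) : gmap A t k s1 s2 0 = A + t := by
  have h0 : ¬ MemT A (A + 2 * k) (A + t) 0 := by
    unfold MemT
    have := h.hA1
    omega
  unfold gmap
  rw [if_neg h0]
  have hd : d2 A t k 0 = 0 := by
    unfold d2
    have := h.hA1
    split_ifs <;> omega
  rw [hd, h.hs20, e2_A]

/-- connectivity at the level of `ℕ` functions -/
def ConnN (M : ℕ) (s : ℕ → ℕ) : Prop :=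
  ∀ S : Finset ℕ, (∀ x ∈ S, x < M) →
    (∀ i ∈ S, ∀ jj ∈ S, ∀ x : ℕ, i ≤ x → x ≤ jj → x ∈ S) →
    (∀ x ∈ S, s x ∈ S) → S = ∅ ∨ ∀ x, x < M → x ∈ S

lemma conn_to_connN {M : ℕ} {σ : Fin M → Fin M} (hσ : Conn σ)
    {s : ℕ → ℕ} (hrel : ∀ q : Fin M, s q.val = (σ q).val) : ConnN M s := by
  intro S hbd hconv hcl
  set S' : Finset (Fin M) := Finset.univ.filter (fun q => q.val ∈ S) with hS'
  have hmem : ∀ q : Fin M, q ∈ S' ↔ q.val ∈ S := by intro q; simp [hS']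
  have hconv' : IsConvexU S' := by
    intro i hi jj hjj x hix hxj
    rw [hmem] at hi hjj ⊢
    exact hconv _ hi _ hjj _ (Fin.le_def.mp hix) (Fin.le_def.mp hxj)
  have hcl' : IsClosedU σ S' := by
    intro q hq
    rw [hmem] at hq ⊢
    rw [← hrel q]
    exact hcl _ hq
  rcases hσ S' hconv' hcl' with h' | h'
  · left
    rw [Finset.eq_empty_iff_forall_notMem]
    intro x hx
    have hin : (⟨x, hbd x hx⟩ : Fin M) ∈ S' := (hmem _).mpr hx
    rw [h'] at hin
    exact absurd hin (Finset.notMem_empty _)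
  · right
    intro x hx
    exact (hmem ⟨x, hx⟩).mp (Finset.eq_univ_iff_forall.mp h' _)

lemma connN_to_conn {M : ℕ} {σ : Fin M → Fin M} {s : ℕ → ℕ} (hs : ConnN M s)
    (hrel : ∀ q : Fin M, s q.val = (σ q).val) : Conn σ := by
  intro S' hconv hcl
  set S : Finset ℕ := S'.image Fin.val with hS
  have hmem : ∀ x : ℕ, x ∈ S ↔ ∃ q ∈ S', q.val = x := by intro x; simp [hS]
  have hmem2 : ∀ q : Fin M, q.val ∈ S ↔ q ∈ S' := by
    intro q
    rw [hmem]
    constructor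
    · rintro ⟨q', hq', hval⟩
      rwa [← Fin.ext hval]
    · intro hq
      exact ⟨q, hq, rfl⟩
  have hbd : ∀ x ∈ S, x < M := by
    intro x hx
    obtain ⟨q, _, rfl⟩ := (hmem x).mp hx
    exact q.isLt
  have hconv' : ∀ i ∈ S, ∀ jj ∈ S, ∀ x : ℕ, i ≤ x → x ≤ jj → x ∈ S := by
    intro i hi jj hjj x hix hxj
    obtain ⟨qi, hqi, rfl⟩ := (hmem i).mp hi
    obtain ⟨qj, hqj, rfl⟩ := (hmem jj).mp hjj
    have hxM : x < M := lt_of_le_of_lt hxj qj.isLt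
    rw [show x = (⟨x, hxM⟩ : Fin M).val from rfl, hmem2]
    exact hconv _ hqi _ hqj _ (Fin.le_def.mpr hix) (Fin.le_def.mpr hxj)
  have hcl' : ∀ x ∈ S, s x ∈ S := by
    intro x hx
    obtain ⟨q, hq, rfl⟩ := (hmem x).mp hx
    rw [hrel q, hmem2]
    exact hcl _ hq
  rcases hs S hbd hconv' hcl' with h' | h'
  · left
    rw [Finset.eq_empty_iff_forall_notMem]
    intro q hq
    have hin : q.val ∈ S := (hmem2 q).mpr hq
    rw [h'] at hin
    exact absurd hin (Finset.notMem_empty _)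
  · right
    apply Finset.eq_univ_of_forall
    intro q
    exact (hmem2 q).mp (h' _ q.isLt)

lemma gmap_connN (h : Hyp k j A t s1 s2) (hc1 : ConnN (2 * k) s1) (hc2 : ConnN (2 * j) s2) :
    ConnN (2 * (k + j)) (gmap A t k s1 s2) := by
  intro S hbd hconv hcl
  set S1 : Finset ℕ := (Finset.range (2 * k)).filter (fun q => e1 A t q ∈ S) with hS1
  set S2 : Finset ℕ := (Finset.range (2 * j)).filter (fun p => e2 A t k p ∈ S) with hS2
  have hm1 : ∀ q, q ∈ S1 ↔ (q < 2 * k ∧ e1 A t q ∈ S) := by intro q; simp [hS1]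
  have hm2 : ∀ p, p ∈ S2 ↔ (p < 2 * j ∧ e2 A t k p ∈ S) := by intro p; simp [hS2]
  have hr1 : S1 = ∅ ∨ ∀ q, q < 2 * k → q ∈ S1 := by
    apply hc1 S1
    · intro q hq; exact ((hm1 q).mp hq).1
    · intro i hi jj hjj x hix hxj
      rw [hm1] at hi hjj ⊢
      refine ⟨by omega, ?_⟩
      exact hconv _ hi.2 _ hjj.2 _ (e1_mono hix) (e1_mono hxj)
    · intro q hq
      rw [hm1] at hq ⊢
      refine ⟨h.hs1b _ hq.1, ?_⟩
      rw [← gmap_e1 h hq.1]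
      exact hcl _ hq.2
  have hr2 : S2 = ∅ ∨ ∀ p, p < 2 * j → p ∈ S2 := by
    apply hc2 S2
    · intro p hp; exact ((hm2 p).mp hp).1
    · intro i hi jj hjj x hix hxj
      rw [hm2] at hi hjj ⊢
      refine ⟨by omega, ?_⟩
      exact hconv _ hi.2 _ hjj.2 _ (e2_mono h.hA2 h.ht2 (by omega) hix)
        (e2_mono h.hA2 h.ht2 hjj.1 hxj)
    · intro p hp
      rw [hm2] at hp ⊢
      refine ⟨h.hs2b _ hp.1, ?_⟩
      rw [← gmap_e2 h hp.1]
      exact hcl _ hp.2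
  rcases hr1 with h1 | h1 <;> rcases hr2 with h2 | h2
  · -- both empty : S = ∅
    left
    rw [Finset.eq_empty_iff_forall_notMem]
    intro x hx
    have hxN : x < 2 * (k + j) := hbd x hx
    by_cases hm : MemT A (A + 2 * k) (A + t) x
    · have hd : d1 A t x ∈ S1 := by
        rw [hm1]
        exact ⟨d1_lt h.ht1 h.ht2 hm, by rwa [e1_d1 hm]⟩
      rw [h1] at hd
      exact absurd hd (Finset.notMem_empty _)
    · have hd : d2 A t k x ∈ S2 := by
        rw [hm2]
        exact ⟨d2_lt h.hA1 h.hA2 h.ht2 h.hk hm hxN, by rwa [e2_d2 h.ht1 h.ht2 hm hxN]⟩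
      rw [h2] at hd
      exact absurd hd (Finset.notMem_empty _)
  · -- S1 empty, S2 full : contradiction
    exfalso
    have hz : (0 : ℕ) ∈ S := by
      have h' := ((hm2 0).mp (h2 0 (by have := h.hj; omega))).2
      rwa [e2_zero h.hA1] at h' 
    have hat : A + t ∈ S := by
      have hAj : A < 2 * j := by have := h.hA2; have := h.hj; omega
      have h' := ((hm2 A).mp (h2 A hAj)).2
      rwa [e2_A] at h' 
    have hA : A ∈ S := hconv _ hz _ hat _ (Nat.zero_le A) (by omega)
    have h0S1 : (0 : ℕ) ∈ S1 := by
      rw [hm1]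
      refine ⟨by have := h.hk; omega, ?_⟩
      rwa [e1_zero h.ht1]
    rw [h1] at h0S1
    exact absurd h0S1 (Finset.notMem_empty _)
  · -- S1 full, S2 empty : contradiction
    exfalso
    have hA : A ∈ S := by
      have h' := ((hm1 0).mp (h1 0 (by have := h.hk; omega))).2
      rwa [e1_zero h.ht1] at h' 
    have hA2k : A + 2 * k ∈ S := by
      have h' := ((hm1 (2 * k - 1)).mp (h1 (2 * k - 1) (by have := h.hk; omega))).2
      rwa [e1_last h.ht2 h.hk] at h' 
    have hat : A + t ∈ S := hconv _ hA _ hA2k _ (by omega) (by have := h.ht2; omega)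
    have hAS2 : A ∈ S2 := by
      rw [hm2]
      refine ⟨by have := h.hA2; have := h.hj; omega, ?_⟩
      rwa [e2_A]
    rw [h2] at hAS2
    exact absurd hAS2 (Finset.notMem_empty _)
  · -- both full : S = everything
    right
    intro x hxN
    by_cases hm : MemT A (A + 2 * k) (A + t) x
    · have hd := ((hm1 _).mp (h1 _ (d1_lt h.ht1 h.ht2 hm))).2
      rwa [e1_d1 hm] at hd
    · have hd := ((hm2 _).mp (h2 _ (d2_lt h.hA1 h.hA2 h.ht2 h.hk hm hxN))).2
      rwa [e2_d2 h.ht1 h.ht2 hm hxN] at hd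

end construct


section construct2

variable {k j A t : ℕ} {s1 s2 : ℕ → ℕ}

lemma e1_inj {a b : ℕ} (h : e1 A t a = e1 A t b) : a = b := by
  unfold e1 at h; split_ifs at h <;> omega

lemma gmap_validcut {N : ℕ} (hN : N = 2 * (k + j)) (h : Hyp k j A t s1 s2)
    (hc1 : ConnN (2 * k) s1)
    (G : Fin N → Fin N) (hG : ∀ x : Fin N, (G x).val = gmap A t k s1 s2 x.val) :
    ValidCut N G (A + t) A (A + 2 * k) := by
  have hk := h.hk; have hj := h.hj; have ht1 := h.ht1; have ht2 := h.ht2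
  have hA1 := h.hA1; have hA2 := h.hA2
  constructor
  · refine ⟨hA1, by omega, by omega, by omega, ?_⟩
    intro x hx
    rw [hG]
    have h1 : gmap A t k s1 s2 x.val = e1 A t (s1 (d1 A t x.val)) := by
      unfold gmap; rw [if_pos hx]
    rw [h1]
    exact e1_mem ht1 ht2 hk (h.hs1b _ (d1_lt ht1 ht2 hx))
  · intro S hsub hconvT hcl
    set S1 : Finset ℕ := S.image (fun x => d1 A t x.val) with hS1
    have hm1 : ∀ q, q ∈ S1 ↔ ∃ x ∈ S, d1 A t x.val = q := by intro q; simp [hS1]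
    have hback : ∀ x ∈ S, e1 A t (d1 A t x.val) = x.val := fun x hx => e1_d1 (hsub x hx)
    have hbd : ∀ q ∈ S1, q < 2 * k := by
      intro q hq
      obtain ⟨x, hx, rfl⟩ := (hm1 q).mp hq
      exact d1_lt ht1 ht2 (hsub x hx)
    have hconv1 : ∀ i ∈ S1, ∀ jj ∈ S1, ∀ x : ℕ, i ≤ x → x ≤ jj → x ∈ S1 := by
      intro i hi jj hjj x hix hxj
      obtain ⟨xi, hxiS, rfl⟩ := (hm1 i).mp hi
      obtain ⟨xj, hxjS, rfl⟩ := (hm1 jj).mp hjj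
      have hx2k : x < 2 * k := lt_of_le_of_lt hxj (hbd _ hjj)
      have hy := e1_mem (A := A) ht1 ht2 hk hx2k
      have hyN : e1 A t x < N := by rw [hN]; exact e1_lt hA2 hj hx2k
      have hyin : (⟨e1 A t x, hyN⟩ : Fin N) ∈ S := by
        apply hconvT xi hxiS xj hxjS
        · rw [Fin.le_def]
          calc xi.val = e1 A t (d1 A t xi.val) := (hback xi hxiS).symm
          _ ≤ e1 A t x := e1_mono hix
        · rw [Fin.le_def]
          calc e1 A t x ≤ e1 A t (d1 A t xj.val) := e1_mono hxj
          _ = xj.val := hback xj hxjS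
        · exact hy
      rw [hm1]
      exact ⟨_, hyin, d1_e1 hx2k⟩
    have hcl1 : ∀ q ∈ S1, s1 q ∈ S1 := by
      intro q hq
      obtain ⟨x, hx, rfl⟩ := (hm1 _).mp hq
      have hgx : (G x).val = e1 A t (s1 (d1 A t x.val)) := by
        rw [hG]
        unfold gmap
        rw [if_pos (hsub x hx)]
      rw [hm1]
      refine ⟨G x, hcl x hx, ?_⟩
      rw [hgx, d1_e1 (h.hs1b _ (d1_lt ht1 ht2 (hsub x hx)))]
    rcases hc1 S1 hbd hconv1 hcl1 with h' | h'
    · left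
      rw [Finset.eq_empty_iff_forall_notMem]
      intro x hx
      have : d1 A t x.val ∈ S1 := (hm1 _).mpr ⟨x, hx, rfl⟩
      rw [h'] at this
      exact absurd this (Finset.notMem_empty _)
    · right
      intro x hmx
      have hd : d1 A t x.val ∈ S1 := h' _ (d1_lt ht1 ht2 hmx)
      obtain ⟨y, hy, hdy⟩ := (hm1 _).mp hd
      have : y.val = x.val := by
        rw [← hback y hy, hdy, e1_d1 hmx]
      rwa [← Fin.ext this]

end construct2

/-- the `ℕ`-valued partner function of a `Fin`-involution -/
noncomputable def sOf {M : ℕ} (σ : Fin M → Fin M) : ℕ → ℕ :=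
  fun q => if h : q < M then (σ ⟨q, h⟩).val else q

lemma sOf_rel {M : ℕ} (σ : Fin M → Fin M) (q : Fin M) : sOf σ q.val = (σ q).val := by
  unfold sOf
  rw [dif_pos q.isLt, Fin.eta]

lemma sOf_lt {M : ℕ} (σ : Fin M → Fin M) {q : ℕ} (hq : q < M) : sOf σ q < M := by
  unfold sOf
  rw [dif_pos hq]
  exact (σ _).isLt

lemma sOf_invol {M : ℕ} {σ : Fin M → Fin M} (hσ : Invol σ) {q : ℕ} (hq : q < M) :
    sOf σ (sOf σ q) = q := by
  have h1 : sOf σ q = (σ ⟨q, hq⟩).val := by unfold sOf; rw [dif_pos hq]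
  rw [h1, sOf_rel, (hσ _).1]

lemma sOf_ne {M : ℕ} {σ : Fin M → Fin M} (hσ : Invol σ) {q : ℕ} (hq : q < M) :
    sOf σ q ≠ q := by
  have h1 : sOf σ q = (σ ⟨q, hq⟩).val := by unfold sOf; rw [dif_pos hq]
  rw [h1]
  intro h
  exact (hσ ⟨q, hq⟩).2 (Fin.ext h)

/-- the index type of the decomposition -/
def Idx (m : ℕ) :=
  Σ K : {k : ℕ // k ∈ Finset.Ico 1 m}, (CD K.1 × CD (m - K.1) × Fin (2 * K.1 - 1))

section phi

variable {m k : ℕ}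

lemma phi_hyp (hk : 1 ≤ k) (hkm : k < m) (σ1 : CD k) (σ2 : CD (m - k))
    {tt : ℕ} (htt : tt < 2 * k - 1) :
    Hyp k (m - k) (sOf σ2.1 0) (tt + 1) (sOf σ1.1) (sOf σ2.1) := by
  have hj : 1 ≤ m - k := by omega
  have h0 : (0 : ℕ) < 2 * (m - k) := by omega
  constructor
  · exact hk
  · exact hj
  · omega
  · omega
  · have := sOf_ne σ2.2.1 h0
    omega
  · have := sOf_lt σ2.1 h0
    omega
  · exact fun q hq => sOf_lt σ1.1 hq
  · exact fun q hq => sOf_invol σ1.2.1 hq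
  · exact fun q hq => sOf_ne σ1.2.1 hq
  · exact fun p hp => sOf_lt σ2.1 hp
  · exact fun p hp => sOf_invol σ2.2.1 hp
  · exact fun p hp => sOf_ne σ2.2.1 hp
  · rfl

noncomputable def phiCD (m k : ℕ) (hk : 1 ≤ k) (hkm : k < m) (σ1 : CD k) (σ2 : CD (m - k))
    (tt : ℕ) (htt : tt < 2 * k - 1) : CD m := by
  have hkj : k + (m - k) = m := by omega
  have hyp := phi_hyp hk hkm σ1 σ2 htt
  set A := sOf σ2.1 0
  set t := tt + 1
  set s1 := sOf σ1.1
  set s2 := sOf σ2.1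
  refine ⟨fun x => ⟨gmap A t k s1 s2 x.val, ?_⟩, ⟨?_, ?_⟩⟩
  · have := gmap_lt hyp (show x.val < 2 * (k + (m - k)) by omega)
    omega
  · intro x
    constructor
    · apply Fin.ext
      exact gmap_invol hyp (show x.val < 2 * (k + (m - k)) by omega)
    · intro hfix
      exact gmap_ne hyp (show x.val < 2 * (k + (m - k)) by omega) (congrArg Fin.val hfix)
  · apply connN_to_conn (s := gmap A t k s1 s2)
    · have h1 := gmap_connN hyp (conn_to_connN σ1.2.2 (sOf_rel σ1.1))
        (conn_to_connN σ2.2.2 (sOf_rel σ2.1))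
      rwa [hkj] at h1
    · intro q
      rfl

noncomputable def phi (m : ℕ) : Idx m → CD m := fun z =>
  phiCD m z.1.1 (Finset.mem_Ico.mp z.1.2).1 (Finset.mem_Ico.mp z.1.2).2
    z.2.1 z.2.2.1 z.2.2.2.val z.2.2.2.isLt

lemma phiCD_val (m k : ℕ) (hk : 1 ≤ k) (hkm : k < m) (σ1 : CD k) (σ2 : CD (m - k))
    (tt : ℕ) (htt : tt < 2 * k - 1) (x : Fin (2 * m)) :
    ((phiCD m k hk hkm σ1 σ2 tt htt).1 x).val =
      gmap (sOf σ2.1 0) (tt + 1) k (sOf σ1.1) (sOf σ2.1) x.val := rfl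

lemma phiCD_validcut (m k : ℕ) (hk : 1 ≤ k) (hkm : k < m) (σ1 : CD k) (σ2 : CD (m - k))
    (tt : ℕ) (htt : tt < 2 * k - 1) :
    ValidCut (2 * m) (phiCD m k hk hkm σ1 σ2 tt htt).1
      (sOf σ2.1 0 + (tt + 1)) (sOf σ2.1 0) (sOf σ2.1 0 + 2 * k) := by
  apply gmap_validcut (j := m - k) (by omega) (phi_hyp hk hkm σ1 σ2 htt)
    (conn_to_connN σ1.2.2 (sOf_rel σ1.1))
  intro x
  rfl

lemma phiCD_zero (m k : ℕ) (hk : 1 ≤ k) (hkm : k < m) (σ1 : CD k) (σ2 : CD (m - k))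
    (tt : ℕ) (htt : tt < 2 * k - 1) (hm : 0 < 2 * m) :
    ((phiCD m k hk hkm σ1 σ2 tt htt).1 ⟨0, hm⟩).val = sOf σ2.1 0 + (tt + 1) := by
  rw [phiCD_val]
  exact gmap_zero (phi_hyp hk hkm σ1 σ2 htt)

lemma phi_injective (m : ℕ) (hm : 2 ≤ m) : Function.Injective (phi m) := by
  rintro ⟨⟨k, hk⟩, σ1, σ2, tt⟩ ⟨⟨k', hk'⟩, σ1', σ2', tt'⟩ heq
  have hco : ((⟨k, hk⟩ : {x : ℕ // x ∈ Finset.Ico 1 m}) : ℕ) = k := rfl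
  have hco' : ((⟨k', hk'⟩ : {x : ℕ // x ∈ Finset.Ico 1 m}) : ℕ) = k' := rfl
  have hk1 : 1 ≤ k := (Finset.mem_Ico.mp hk).1
  have hkm : k < m := (Finset.mem_Ico.mp hk).2
  have hk1' : 1 ≤ k' := (Finset.mem_Ico.mp hk').1
  have hkm' : k' < m := (Finset.mem_Ico.mp hk').2
  have hyp := phi_hyp hk1 hkm σ1 σ2 tt.isLt
  have hyp' := phi_hyp hk1' hkm' σ1' σ2' tt'.isLt
  unfold phi at heq
  simp only at heq
  have hv := phiCD_validcut m k hk1 hkm σ1 σ2 tt.val tt.isLt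
  have hv' := phiCD_validcut m k' hk1' hkm' σ1' σ2' tt'.val tt'.isLt
  have hm0 : 0 < 2 * m := by omega
  have hz := phiCD_zero m k hk1 hkm σ1 σ2 tt.val tt.isLt hm0
  have hz' := phiCD_zero m k' hk1' hkm' σ1' σ2' tt'.val tt'.isLt hm0
  rw [heq] at hv hz
  rw [hz'] at hz
  rw [← hz] at hv
  have huniq := cut_unique hv hv'
  set A := sOf σ2.1 0 with hA
  set A' := sOf σ2'.1 0 with hA'
  have hAA : A = A' := huniq.1
  have hkk : k = k' := by omega
  subst hkk
  have httv : tt.val = tt'.val := by omega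
  have htt : tt = tt' := Fin.ext httv
  subst htt
  have hfun : ∀ x : Fin (2 * m),
      gmap A (tt.val + 1) k (sOf σ1.1) (sOf σ2.1) x.val =
      gmap A' (tt.val + 1) k (sOf σ1'.1) (sOf σ2'.1) x.val := by
    intro x
    have h0 := congrArg (fun z : CD m => (z.1 x).val) heq
    simpa [phiCD_val] using h0
  have hσ1 : σ1 = σ1' := by
    apply Subtype.ext
    funext q
    apply Fin.ext
    have hqN : e1 A (tt.val + 1) q.val < 2 * m := by
      have := e1_lt (j := m - k) (t := tt.val + 1) hyp.hA2 hyp.hj q.isLt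
      omega
    have h1 := hfun ⟨e1 A (tt.val + 1) q.val, hqN⟩
    simp only at h1
    rw [gmap_e1 hyp q.isLt] at h1
    rw [← hAA] at h1
    rw [gmap_e1 (by rw [hAA]; exact hyp') q.isLt] at h1
    have h2 := e1_inj h1
    rw [sOf_rel, sOf_rel] at h2
    exact h2
  have hσ2 : σ2 = σ2' := by
    apply Subtype.ext
    funext p
    apply Fin.ext
    have hpN : e2 A (tt.val + 1) k p.val < 2 * m := by
      have := e2_lt (j := m - k) (t := tt.val + 1) hyp.hA2 hyp.hj hyp.ht2 hyp.hk p.isLt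
      omega
    have h1 := hfun ⟨e2 A (tt.val + 1) k p.val, hpN⟩
    simp only at h1
    rw [gmap_e2 hyp p.isLt] at h1
    rw [← hAA] at h1
    rw [gmap_e2 (by rw [hAA]; exact hyp') p.isLt] at h1
    have h2 : sOf σ2.1 p.val = sOf σ2'.1 p.val := by
      have hb := hyp.hs2b p.val p.isLt
      have hb' : sOf σ2'.1 p.val < 2 * (m - k) := sOf_lt σ2'.1 p.isLt
      have hd := d2_e2 (A := A) (t := tt.val + 1) (j := m - k) hyp.ht1 hyp.ht2 hyp.hk hb
      have hd' := d2_e2 (A := A) (t := tt.val + 1) (j := m - k) hyp.ht1 hyp.ht2 hyp.hk hb'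
      rw [← hd, ← hd', h1]
    rw [sOf_rel, sOf_rel] at h2
    exact h2
  subst hσ1
  subst hσ2
  rfl

end phi


lemma e2_inj {A t k j a b : ℕ} (ht1 : 1 ≤ t) (ht2 : t ≤ 2 * k - 1) (hk : 1 ≤ k)
    (h : e2 A t k a = e2 A t k b) : a = b := by
  unfold e2 at h; split_ifs at h <;> omega

lemma phi_surjective (m : ℕ) (hm : 2 ≤ m) : Function.Surjective (phi m) := by
  intro G
  have hN0 : 0 < 2 * m := by omega
  have hN3 : 3 < 2 * m := by omega
  obtain ⟨g, hg, hc⟩ := G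
  set a := (g ⟨0, hN0⟩).val with ha
  obtain ⟨l, r, hcut⟩ := cut_exists hg hc hN3 ha.symm
  have hab : 2 ≤ a ∧ a ≤ 2 * m - 2 := by
    have := g0_bounds hg hc hN3 hN0
    omega
  obtain ⟨⟨hl1, hla, har, hrN, hclo⟩, hC1⟩ := hcut
  -- evenness of r - l
  have heven : 2 ∣ (r - l) := by
    set Tf : Finset (Fin (2 * m)) := Finset.univ.filter (fun x => MemT l r a x.val) with hTf
    have hTmem : ∀ x : Fin (2 * m), x ∈ Tf ↔ MemT l r a x.val := by intro x; simp [hTf]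
    have hTcl : IsClosedU g Tf := by
      intro x hx
      rw [hTmem] at hx ⊢
      exact hclo x hx
    have hTcard : Tf.card = r - l := by
      have hbij : Tf.card = ((Finset.Icc l r).erase a).card := by
        apply Finset.card_bij (fun x _ => x.val)
        · intro x hx
          rw [hTmem] at hx
          unfold MemT at hx
          rw [Finset.mem_erase, Finset.mem_Icc]
          exact ⟨hx.2.2, hx.1, hx.2.1⟩
        · intro x _ y _ hxy
          exact Fin.ext hxy
        · intro y hy
          rw [Finset.mem_erase, Finset.mem_Icc] at hy
          have hyN : y < 2 * m := by omega
          refine ⟨⟨y, hyN⟩, ?_, rfl⟩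
          rw [hTmem]
          unfold MemT
          exact ⟨hy.2.1, hy.2.2, hy.1⟩
      rw [hbij, Finset.card_erase_of_mem (by rw [Finset.mem_Icc]; omega), Nat.card_Icc]
      omega
    obtain ⟨c, hc2⟩ := even_card_invol g hg Tf hTcl
    rw [hTcard] at hc2
    exact ⟨c, by omega⟩
  set k := (r - l) / 2 with hkdef
  have h2k : 2 * k = r - l := by omega
  set t := a - l with htdef
  have hk1 : 1 ≤ k := by omega
  have hkm : k < m := by omega
  set j := m - k with hjdef
  have hkj : k + j = m := by omega
  have ht1 : 1 ≤ t := by omega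
  have ht2 : t ≤ 2 * k - 1 := by omega
  have hA1 : 1 ≤ l := hl1
  have hA2 : l ≤ 2 * j - 1 := by omega
  have har' : a = l + t := by omega
  have hrr : r = l + 2 * k := by omega
  rw [har', hrr] at hclo hC1
  have hcloC : ∀ x : Fin (2 * m), ¬ MemT l (l + 2 * k) (l + t) x.val →
      ¬ MemT l (l + 2 * k) (l + t) (g x).val := by
    intro x hx hgx
    have h1 := hclo (g x) hgx
    rw [(hg x).1] at h1
    exact hx h1
  have hC2 := cut_c2conn hg hc hN0 (show (g ⟨0, hN0⟩).val = l + t by omega)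
    (show 2 ≤ l + t by omega)
    ⟨hl1, show l < l + t by omega, show l + t < l + 2 * k by omega,
      show l + 2 * k ≤ 2 * m - 1 by omega, hclo⟩
  -- bounds for the two embeddings
  have hE1 : ∀ q : Fin (2 * k), e1 l t q.val < 2 * m := by
    intro q
    have := e1_lt (A := l) (t := t) (j := j) hA2 (by omega) q.isLt
    omega
  have hE2 : ∀ p : Fin (2 * j), e2 l t k p.val < 2 * m := by
    intro p
    have := e2_lt (A := l) (t := t) (j := j) hA2 (by omega) ht2 hk1 p.isLt
    omega
  have hmem1 : ∀ q : Fin (2 * k), MemT l (l + 2 * k) (l + t) (e1 l t q.val) :=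
    fun q => e1_mem ht1 ht2 hk1 q.isLt
  have hmem2 : ∀ p : Fin (2 * j), ¬ MemT l (l + 2 * k) (l + t) (e2 l t k p.val) :=
    fun p => e2_not_mem hA1 ht1 ht2 hk1 p.isLt
  -- the two extracted involutions
  set σ1 : Fin (2 * k) → Fin (2 * k) := fun q =>
    ⟨d1 l t ((g ⟨e1 l t q.val, hE1 q⟩).val),
      d1_lt ht1 ht2 (hclo _ (hmem1 q))⟩ with hσ1def
  set σ2 : Fin (2 * j) → Fin (2 * j) := fun p =>
    ⟨d2 l t k ((g ⟨e2 l t k p.val, hE2 p⟩).val),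
      d2_lt hA1 hA2 ht2 hk1 (hcloC _ (hmem2 p))
        (by have := (g ⟨e2 l t k p.val, hE2 p⟩).isLt; omega)⟩ with hσ2def
  -- basic identities
  have hback1 : ∀ q : Fin (2 * k), e1 l t ((σ1 q).val) = (g ⟨e1 l t q.val, hE1 q⟩).val :=
    fun q => e1_d1 (hclo _ (hmem1 q))
  have hback2 : ∀ p : Fin (2 * j), e2 l t k ((σ2 p).val) = (g ⟨e2 l t k p.val, hE2 p⟩).val :=
    fun p => e2_d2 (j := j) ht1 ht2 (hcloC _ (hmem2 p))
      (by have := (g ⟨e2 l t k p.val, hE2 p⟩).isLt; omega)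
  have hg1 : ∀ q : Fin (2 * k), g ⟨e1 l t q.val, hE1 q⟩ = ⟨e1 l t ((σ1 q).val), hE1 (σ1 q)⟩ :=
    fun q => Fin.ext (hback1 q).symm
  have hg2 : ∀ p : Fin (2 * j), g ⟨e2 l t k p.val, hE2 p⟩ = ⟨e2 l t k ((σ2 p).val), hE2 (σ2 p)⟩ :=
    fun p => Fin.ext (hback2 p).symm
  have hinv1 : Invol σ1 := by
    intro q
    constructor
    · apply Fin.ext
      show d1 l t ((g ⟨e1 l t ((σ1 q).val), hE1 (σ1 q)⟩).val) = q.val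
      rw [← hg1 q, (hg _).1]
      exact d1_e1 q.isLt
    · intro hfix
      have h1 := congrArg (fun z : Fin (2 * k) => e1 l t z.val) hfix
      rw [hback1 q] at h1
      have : g ⟨e1 l t q.val, hE1 q⟩ = ⟨e1 l t q.val, hE1 q⟩ := Fin.ext h1
      exact (hg _).2 this
  have hinv2 : Invol σ2 := by
    intro p
    constructor
    · apply Fin.ext
      show d2 l t k ((g ⟨e2 l t k ((σ2 p).val), hE2 (σ2 p)⟩).val) = p.val
      rw [← hg2 p, (hg _).1]
      exact d2_e2 ht1 ht2 hk1 p.isLt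
    · intro hfix
      have h1 := congrArg (fun z : Fin (2 * j) => e2 l t k z.val) hfix
      rw [hback2 p] at h1
      have : g ⟨e2 l t k p.val, hE2 p⟩ = ⟨e2 l t k p.val, hE2 p⟩ := Fin.ext h1
      exact (hg _).2 this
  -- connectivity of σ1
  have hconn1 : Conn σ1 := by
    intro S1 hconv hcl
    set S : Finset (Fin (2 * m)) := S1.image (fun q => ⟨e1 l t q.val, hE1 q⟩) with hSdef
    have hSmem : ∀ x : Fin (2 * m), x ∈ S ↔ ∃ q ∈ S1, e1 l t q.val = x.val := by
      intro x
      simp only [hSdef, Finset.mem_image]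
      constructor
      · rintro ⟨q, hq, rfl⟩; exact ⟨q, hq, rfl⟩
      · rintro ⟨q, hq, hqx⟩; exact ⟨q, hq, Fin.ext hqx⟩
    have hsub : ∀ x ∈ S, MemT l (l + 2 * k) (l + t) x.val := by
      intro x hx
      obtain ⟨q, _, hqx⟩ := (hSmem x).mp hx
      rw [← hqx]
      exact hmem1 q
    have hconvS : ∀ i ∈ S, ∀ jj ∈ S, ∀ x : Fin (2 * m), i ≤ x → x ≤ jj →
        MemT l (l + 2 * k) (l + t) x.val → x ∈ S := by
      intro i hi jj hjj x hix hxj hmx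
      obtain ⟨qi, hqi, hqix⟩ := (hSmem i).mp hi
      obtain ⟨qj, hqj, hqjx⟩ := (hSmem jj).mp hjj
      have hd1x : d1 l t x.val < 2 * k := d1_lt ht1 ht2 hmx
      have hxe : e1 l t (d1 l t x.val) = x.val := e1_d1 hmx
      have hqi_le : qi.val ≤ d1 l t x.val := by
        by_contra hlt
        have := e1_strict_mono (A := l) (t := t) (show d1 l t x.val < qi.val by omega)
        have h2 := Fin.le_def.mp hix
        omega
      have hqj_ge : d1 l t x.val ≤ qj.val := by
        by_contra hlt
        have := e1_strict_mono (A := l) (t := t) (show qj.val < d1 l t x.val by omega)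
        have h2 := Fin.le_def.mp hxj
        omega
      have hdin : (⟨d1 l t x.val, hd1x⟩ : Fin (2 * k)) ∈ S1 :=
        hconv qi hqi qj hqj _ (Fin.le_def.mpr hqi_le) (Fin.le_def.mpr hqj_ge)
      rw [hSmem]
      exact ⟨_, hdin, hxe⟩
    have hclS : IsClosedU g S := by
      intro x hx
      obtain ⟨q, hq, hqx⟩ := (hSmem x).mp hx
      have hxq : x = ⟨e1 l t q.val, hE1 q⟩ := Fin.ext hqx.symm
      rw [hSmem, hxq, hg1 q]
      exact ⟨σ1 q, hcl q hq, rfl⟩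
    rcases hC1 S hsub hconvS hclS with h' | h'
    · left
      rw [← Finset.image_eq_empty (f := fun q : Fin (2 * k) => (⟨e1 l t q.val, hE1 q⟩ : Fin (2 * m)))]
      exact h'
    · right
      apply Finset.eq_univ_of_forall
      intro q
      have hin : (⟨e1 l t q.val, hE1 q⟩ : Fin (2 * m)) ∈ S := h' _ (hmem1 q)
      obtain ⟨q', hq', hval⟩ := (hSmem _).mp hin
      have hqq : q' = q := Fin.ext (e1_inj hval)
      rwa [← hqq]
  -- connectivity of σ2
  have hconn2 : Conn σ2 := by
    intro S2 hconv hcl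
    set S : Finset (Fin (2 * m)) := S2.image (fun p => ⟨e2 l t k p.val, hE2 p⟩) with hSdef
    have hSmem : ∀ x : Fin (2 * m), x ∈ S ↔ ∃ p ∈ S2, e2 l t k p.val = x.val := by
      intro x
      simp only [hSdef, Finset.mem_image]
      constructor
      · rintro ⟨p, hp, rfl⟩; exact ⟨p, hp, rfl⟩
      · rintro ⟨p, hp, hpx⟩; exact ⟨p, hp, Fin.ext hpx⟩
    have hsub : ∀ x ∈ S, ¬ MemT l (l + 2 * k) (l + t) x.val := by
      intro x hx
      obtain ⟨p, _, hpx⟩ := (hSmem x).mp hx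
      rw [← hpx]
      exact hmem2 p
    have hconvS : ∀ i ∈ S, ∀ jj ∈ S, ∀ x : Fin (2 * m), i ≤ x → x ≤ jj →
        ¬ MemT l (l + 2 * k) (l + t) x.val → x ∈ S := by
      intro i hi jj hjj x hix hxj hmx
      obtain ⟨pi, hpi, hpix⟩ := (hSmem i).mp hi
      obtain ⟨pj, hpj, hpjx⟩ := (hSmem jj).mp hjj
      have hd2x : d2 l t k x.val < 2 * j := d2_lt hA1 hA2 ht2 hk1 hmx (by have := x.isLt; omega)
      have hxe : e2 l t k (d2 l t k x.val) = x.val := e2_d2 (j := j) ht1 ht2 hmx (by have := x.isLt; omega)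
      have hpi_le : pi.val ≤ d2 l t k x.val := by
        by_contra hlt
        have := e2_strict_mono (A := l) (t := t) (k := k) ht1 ht2
          (show d2 l t k x.val < pi.val by omega)
        have h2 := Fin.le_def.mp hix
        omega
      have hpj_ge : d2 l t k x.val ≤ pj.val := by
        by_contra hlt
        have := e2_strict_mono (A := l) (t := t) (k := k) ht1 ht2
          (show pj.val < d2 l t k x.val by omega)
        have h2 := Fin.le_def.mp hxj
        omega
      have hdin : (⟨d2 l t k x.val, hd2x⟩ : Fin (2 * j)) ∈ S2 :=
        hconv pi hpi pj hpj _ (Fin.le_def.mpr hpi_le) (Fin.le_def.mpr hpj_ge)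
      rw [hSmem]
      exact ⟨_, hdin, hxe⟩
    have hclS : IsClosedU g S := by
      intro x hx
      obtain ⟨p, hp, hpx⟩ := (hSmem x).mp hx
      have hxp : x = ⟨e2 l t k p.val, hE2 p⟩ := Fin.ext hpx.symm
      rw [hSmem, hxp, hg2 p]
      exact ⟨σ2 p, hcl p hp, rfl⟩
    rcases hC2 S hsub hconvS hclS with h' | h'
    · left
      rw [← Finset.image_eq_empty (f := fun p : Fin (2 * j) => (⟨e2 l t k p.val, hE2 p⟩ : Fin (2 * m)))]
      exact h'
    · right
      apply Finset.eq_univ_of_forall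
      intro p
      have hin : (⟨e2 l t k p.val, hE2 p⟩ : Fin (2 * m)) ∈ S := h' _ (hmem2 p)
      obtain ⟨p', hp', hval⟩ := (hSmem _).mp hin
      have hpp : p' = p := Fin.ext (e2_inj (j := j) ht1 ht2 hk1 hval)
      rwa [← hpp]
  -- assemble the preimage
  refine ⟨⟨⟨k, Finset.mem_Ico.mpr ⟨hk1, hkm⟩⟩, ⟨σ1, hinv1, hconn1⟩, ⟨σ2, hinv2, hconn2⟩,
    ⟨t - 1, show t - 1 < 2 * k - 1 by omega⟩⟩, ?_⟩
  apply Subtype.ext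
  show (phiCD m k _ _ _ _ (t - 1) _).1 = g
  funext x
  apply Fin.ext
  rw [phiCD_val]
  simp only
  -- identify the parameters
  have hA0 : sOf σ2 0 = l := by
    have h0 : (0 : ℕ) < 2 * j := by omega
    have h1 : sOf σ2 0 = (σ2 ⟨0, h0⟩).val := by unfold sOf; rw [dif_pos h0]
    rw [h1]
    show d2 l t k ((g ⟨e2 l t k (⟨0, h0⟩ : Fin (2 * j)).val, hE2 ⟨0, h0⟩⟩).val) = l
    have hz : (⟨e2 l t k (⟨0, h0⟩ : Fin (2 * j)).val, hE2 ⟨0, h0⟩⟩ : Fin (2 * m)) = ⟨0, hN0⟩ := by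
      apply Fin.ext
      show e2 l t k 0 = 0
      exact e2_zero hA1
    rw [hz, ← ha, har']
    unfold d2
    split_ifs <;> omega
  have htt1 : t - 1 + 1 = t := by omega
  rw [hA0, htt1]
  -- now the pointwise identity
  by_cases hmx : MemT l (l + 2 * k) (l + t) x.val
  · have hd1x : d1 l t x.val < 2 * k := d1_lt ht1 ht2 hmx
    have hxe : e1 l t (d1 l t x.val) = x.val := e1_d1 hmx
    have h1 : gmap l t k (sOf σ1) (sOf σ2) x.val = e1 l t (sOf σ1 (d1 l t x.val)) := by
      unfold gmap; rw [if_pos hmx]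
    rw [h1]
    have h2 : sOf σ1 (d1 l t x.val) = (σ1 ⟨d1 l t x.val, hd1x⟩).val := by
      unfold sOf; rw [dif_pos hd1x]
    rw [h2]
    have hxq : (⟨e1 l t (⟨d1 l t x.val, hd1x⟩ : Fin (2 * k)).val, hE1 _⟩ : Fin (2 * m)) = x := by
      apply Fin.ext
      exact hxe
    show e1 l t (d1 l t ((g ⟨e1 l t (⟨d1 l t x.val, hd1x⟩ : Fin (2 * k)).val, hE1 _⟩).val)) = (g x).val
    rw [hxq]
    exact e1_d1 (hclo x hmx)
  · have hxN : x.val < 2 * (k + j) := by have := x.isLt; omega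
    have hd2x : d2 l t k x.val < 2 * j := d2_lt hA1 hA2 ht2 hk1 hmx hxN
    have hxe : e2 l t k (d2 l t k x.val) = x.val := e2_d2 (j := j) ht1 ht2 hmx hxN
    have h1 : gmap l t k (sOf σ1) (sOf σ2) x.val = e2 l t k (sOf σ2 (d2 l t k x.val)) := by
      unfold gmap; rw [if_neg hmx]
    rw [h1]
    have h2 : sOf σ2 (d2 l t k x.val) = (σ2 ⟨d2 l t k x.val, hd2x⟩).val := by
      unfold sOf; rw [dif_pos hd2x]
    rw [h2]
    have hxq : (⟨e2 l t k (⟨d2 l t k x.val, hd2x⟩ : Fin (2 * j)).val, hE2 _⟩ : Fin (2 * m)) = x := by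
      apply Fin.ext
      exact hxe
    show e2 l t k (d2 l t k ((g ⟨e2 l t k (⟨d2 l t k x.val, hd2x⟩ : Fin (2 * j)).val, hE2 _⟩).val)) = (g x).val
    rw [hxq]
    exact e2_d2 (j := j) ht1 ht2 (hcloC x hmx) (by have := (g x).isLt; omega)


lemma card_CD_rec (m : ℕ) (hm : 2 ≤ m) :
    Nat.card (CD m) =
      ∑ K ∈ Finset.Ico 1 m, (2 * K - 1) * (Nat.card (CD K) * Nat.card (CD (m - K))) := by
  classical
  have hbij : Function.Bijective (phi m) := ⟨phi_injective m hm, phi_surjective m hm⟩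
  have h1 : Nat.card (Idx m) = Nat.card (CD m) := Nat.card_eq_of_bijective _ hbij
  rw [← h1]
  have hfac : ∀ K : {k : ℕ // k ∈ Finset.Ico 1 m},
      Nat.card (CD K.1 × CD (m - K.1) × Fin (2 * K.1 - 1)) =
        (2 * K.1 - 1) * (Nat.card (CD K.1) * Nat.card (CD (m - K.1))) := by
    intro K
    rw [Nat.card_prod, Nat.card_prod]
    have hfin : Nat.card (Fin (2 * K.1 - 1)) = 2 * K.1 - 1 := by
      simp [Nat.card_eq_fintype_card]
    rw [hfin]
    ring
  letI : ∀ K : {k : ℕ // k ∈ Finset.Ico 1 m},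
      Fintype (CD K.1 × CD (m - K.1) × Fin (2 * K.1 - 1)) := fun K => Fintype.ofFinite _
  have h2 : Nat.card (Idx m) =
      ∑ K : {k : ℕ // k ∈ Finset.Ico 1 m},
        Nat.card (CD K.1 × CD (m - K.1) × Fin (2 * K.1 - 1)) := by
    unfold Idx
    rw [Nat.card_eq_fintype_card, Fintype.card_sigma]
    apply Finset.sum_congr rfl
    intro K _
    rw [Nat.card_eq_fintype_card]
  rw [h2]
  have h3 : ∑ K : {k : ℕ // k ∈ Finset.Ico 1 m},
      Nat.card (CD K.1 × CD (m - K.1) × Fin (2 * K.1 - 1)) =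
      ∑ K : {k : ℕ // k ∈ Finset.Ico 1 m},
        (2 * K.1 - 1) * (Nat.card (CD K.1) * Nat.card (CD (m - K.1))) :=
    Finset.sum_congr rfl (fun K _ => hfac K)
  rw [h3]
  exact Finset.sum_coe_sort (Finset.Ico 1 m)
    (fun K => (2 * K - 1) * (Nat.card (CD K) * Nat.card (CD (m - K))))

lemma sum_reflect (c : ℕ → ℕ) (m : ℕ) (hm : 2 ≤ m) :
    ∑ k ∈ Finset.Ico 1 m, (2 * k - 1) * (c k * c (m - k)) =
      (m - 1) * ∑ k ∈ Finset.Ico 1 m, c k * c (m - k) := by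
  set g : ℕ → ℕ := fun k => (2 * k - 1) * (c k * c (m - k)) with hg
  have h1 : ∑ k ∈ Finset.Ico 1 m, g (m - k) = ∑ k ∈ Finset.Ico 1 m, g k := by
    have := Finset.sum_Ico_reflect g 1 (show m ≤ m + 1 by omega)
    simpa using this
  have h2 : ∀ k ∈ Finset.Ico 1 m, g k + g (m - k) = (2 * m - 2) * (c k * c (m - k)) := by
    intro k hk
    rw [Finset.mem_Ico] at hk
    have hmk : m - (m - k) = k := by omega
    have : g (m - k) = (2 * (m - k) - 1) * (c (m - k) * c k) := by
      rw [hg]; simp only; rw [hmk]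
    rw [this, hg]
    simp only
    rw [mul_comm (c (m - k)) (c k)]
    have hco : (2 * k - 1) + (2 * (m - k) - 1) = 2 * m - 2 := by omega
    rw [← add_mul, hco]
  have h3 : 2 * ∑ k ∈ Finset.Ico 1 m, g k =
      (2 * m - 2) * ∑ k ∈ Finset.Ico 1 m, c k * c (m - k) := by
    calc 2 * ∑ k ∈ Finset.Ico 1 m, g k
        = ∑ k ∈ Finset.Ico 1 m, g k + ∑ k ∈ Finset.Ico 1 m, g k := two_mul _
      _ = ∑ k ∈ Finset.Ico 1 m, g k + ∑ k ∈ Finset.Ico 1 m, g (m - k) := by rw [h1]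
      _ = ∑ k ∈ Finset.Ico 1 m, (g k + g (m - k)) := Finset.sum_add_distrib.symm
      _ = ∑ k ∈ Finset.Ico 1 m, (2 * m - 2) * (c k * c (m - k)) := Finset.sum_congr rfl h2
      _ = (2 * m - 2) * ∑ k ∈ Finset.Ico 1 m, c k * c (m - k) := (Finset.mul_sum _ _ _).symm
  have h4 : (2 * m - 2) * ∑ k ∈ Finset.Ico 1 m, c k * c (m - k) =
      2 * ((m - 1) * ∑ k ∈ Finset.Ico 1 m, c k * c (m - k)) := by
    rw [← mul_assoc]
    congr 1
    omega
  have h5 : 2 * ∑ k ∈ Finset.Ico 1 m, g k =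
      2 * ((m - 1) * ∑ k ∈ Finset.Ico 1 m, c k * c (m - k)) := by rw [h3, h4]
  exact Nat.eq_of_mul_eq_mul_left (by norm_num) h5

end CPR

/-- The number of connected (irreducible) pairings `c_{2n}` of `{1,…,2n}` satisfies the
Riordan recursion `c_{2n} = (n-1) · Σ_{i=1}^{n-1} c_{2i} c_{2(n-i)}` for `n ≥ 2`,
with `c_2 = 1`. -/
theorem connPairing_riordan_recursion :
    connPairingCount 1 = 1 ∧
    ∀ n : ℕ, 2 ≤ n →
      connPairingCount n =
        (n - 1) * ∑ i ∈ Finset.Ico 1 n, connPairingCount i * connPairingCount (n - i) := by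
  have key : ∀ n : ℕ, connPairingCount n = Nat.card (CPR.CD n) := by
    intro n
    exact Nat.card_congr (CPR.pairEquiv (2 * n))
  constructor
  · rw [key 1, CPR.card_CD_one]
  · intro n hn
    rw [key n, CPR.card_CD_rec n hn]
    have h1 : ∑ k ∈ Finset.Ico 1 n,
        (2 * k - 1) * (Nat.card (CPR.CD k) * Nat.card (CPR.CD (n - k))) =
        (n - 1) * ∑ k ∈ Finset.Ico 1 n, Nat.card (CPR.CD k) * Nat.card (CPR.CD (n - k)) :=
      CPR.sum_reflect (fun i => Nat.card (CPR.CD i)) n hn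
    rw [h1]
    congr 1
    apply Finset.sum_congr rfl
    intro k _
    rw [key k, key (n - k)]
end

section
/- For the sequence s defined by s_0 = 1 and s_{2n} = n Σ_{i=0}^{n-1} s_{2i} s_{2(n-i-1)}, one has s_{2n} = Σ over planar rooted binary trees t with n vertices of the tree factorial t!. -/
/-- Planar rooted binary trees. -/
inductive BTree : Type
  | nil : BTree
  | node : BTree → BTree → BTree
  deriving DecidableEq

/-- Number of vertices of a planar rooted binary tree. -/
def BTree.size : BTree → ℕ
  | .nil => 0
  | .node l r => l.size + r.size + 1

/-- The tree factorial: the empty tree has factorial 1, and a tree with `n > 0` vertices,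
left branch `t₁` and right branch `t₂` has factorial `n · t₁! · t₂!`. -/
def BTree.tfact : BTree → ℕ
  | .nil => 1
  | .node l r => (l.size + r.size + 1) * l.tfact * r.tfact

/-- The finset of all planar rooted binary trees with `n` vertices. -/
def treesOf : ℕ → Finset BTree
  | 0 => {BTree.nil}
  | (n + 1) =>
      (Finset.range (n + 1)).attach.biUnion fun k =>
        ((treesOf k.1) ×ˢ (treesOf (n - k.1))).image fun p => BTree.node p.1 p.2
  decreasing_by
  · exact Finset.mem_range.mp k.2
  · exact Nat.lt_succ_of_le (Nat.sub_le n k.1)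

lemma size_of_mem : ∀ n : ℕ, ∀ t ∈ treesOf n, t.size = n := by
  intro n
  induction n using Nat.strong_induction_on with
  | _ n ih =>
    match n with
    | 0 =>
      intro t ht
      simp only [treesOf, Finset.mem_singleton] at ht
      simp [ht, BTree.size]
    | n + 1 =>
      intro t ht
      rw [treesOf] at ht
      simp only [Finset.mem_biUnion, Finset.mem_attach, Finset.mem_image,
        Finset.mem_product, true_and] at ht
      obtain ⟨⟨k, hk⟩, ⟨⟨l, r⟩, ⟨hl, hr⟩, rfl⟩⟩ := ht
      have hk' := Finset.mem_range.mp hk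
      have h1 := ih k hk' l hl
      have h2 := ih (n - k) (Nat.lt_succ_of_le (Nat.sub_le n k)) r hr
      simp only [BTree.size, h1, h2]
      omega

lemma sum_treesOf_succ (n : ℕ) :
    ∑ t ∈ treesOf (n + 1), t.tfact =
      (n + 1) * ∑ k ∈ Finset.range (n + 1),
        (∑ t ∈ treesOf k, t.tfact) * (∑ t ∈ treesOf (n - k), t.tfact) := by
  rw [treesOf]
  rw [Finset.sum_biUnion]
  · rw [Finset.mul_sum, ← Finset.sum_attach (Finset.range (n+1))
      (fun k => (n+1) * ((∑ t ∈ treesOf k, t.tfact) * (∑ t ∈ treesOf (n - k), t.tfact)))]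
    apply Finset.sum_congr rfl
    intro ⟨k, hk⟩ _
    have hk' := Finset.mem_range.mp hk
    rw [Finset.sum_image]
    · rw [Finset.sum_product]
      have step : ∑ l ∈ treesOf k, ∑ r ∈ treesOf (n - k), ((l, r).1.node (l, r).2).tfact
          = ∑ l ∈ treesOf k, ∑ r ∈ treesOf (n - k), (n + 1) * l.tfact * r.tfact := by
        apply Finset.sum_congr rfl
        intro l hl
        apply Finset.sum_congr rfl
        intro r hr
        have h1 := size_of_mem k l hl
        have h2 := size_of_mem (n - k) r hr
        have hs : l.size + r.size + 1 = n + 1 := by omega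
        simp only [BTree.tfact, hs]
      rw [step]
      simp only [Finset.mul_sum, Finset.sum_mul, mul_assoc]
      rw [Finset.sum_comm]
    · intro p _ q _ h
      simp only [BTree.node.injEq] at h
      exact Prod.ext h.1 h.2
  · intro ⟨a, ha⟩ _ ⟨b, hb⟩ _ hab
    have hne : a ≠ b := fun h => hab (Subtype.ext h)
    simp only [Function.onFun]
    rw [Finset.disjoint_left]
    rintro x hx1 hx2
    simp only [Finset.mem_image, Finset.mem_product] at hx1 hx2
    obtain ⟨⟨l1, r1⟩, ⟨hl1, _⟩, rfl⟩ := hx1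
    obtain ⟨⟨l2, r2⟩, ⟨hl2, _⟩, heq⟩ := hx2
    simp only [BTree.node.injEq] at heq
    apply hne
    rw [← size_of_mem a l1 hl1, ← size_of_mem b l2 hl2, heq.1]

/-- For `s` defined by `s_0 = 1` and `s_{2n} = n Σ_{i=0}^{n-1} s_{2i} s_{2(n-i-1)}`,
`s_{2n}` equals the sum of the tree factorials `t!` over all planar rooted binary trees
`t` with `n` vertices. -/
theorem s_eq_sum_tree_factorials (s : ℕ → ℕ) (h0 : s 0 = 1)
    (hrec : ∀ n : ℕ, 1 ≤ n →
      s (2 * n) = n * ∑ i ∈ Finset.range n, s (2 * i) * s (2 * (n - i - 1))) :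
    ∀ n : ℕ, s (2 * n) = ∑ t ∈ treesOf n, t.tfact := by
  intro n
  induction n using Nat.strong_induction_on with
  | _ n ih =>
    match n with
    | 0 => simp [treesOf, BTree.tfact, h0]
    | n + 1 =>
      rw [hrec (n + 1) (Nat.le_add_left 1 n), sum_treesOf_succ]
      congr 1
      apply Finset.sum_congr rfl
      intro i hi
      have hi' := Finset.mem_range.mp hi
      rw [ih i (by omega), show n + 1 - i - 1 = n - i by omega,
        ih (n - i) (by omega)]
end

section
/- For a planar rooted binary tree t with n vertices, the tree factorial t! equals the number of anti-increasing labelings of t with the distinct numbers 1, 2, ..., n. -/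
/-- Planar rooted binary trees with an integer label at each vertex. -/
inductive LTree : Type
  | nil : LTree
  | node : LTree → LTree → ℕ → LTree
  deriving DecidableEq

/-- The underlying unlabeled tree. -/
def LTree.shape : LTree → BTree
  | .nil => BTree.nil
  | .node l r _ => BTree.node l.shape r.shape

/-- The multiset of labels used. -/
def LTree.labels : LTree → Multiset ℕ
  | .nil => 0
  | .node l r k => k ::ₘ (l.labels + r.labels)

/-- A labeling is anti-increasing if at every vertex all labels of the left subtree are
strictly smaller than all labels of the right subtree. -/
def LTree.AntiInc : LTree → Prop
  | .nil => True
  | .node l r _ => l.AntiInc ∧ r.AntiInc ∧ ∀ a ∈ l.labels, ∀ b ∈ r.labels, a < b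

-- aux lemmas
lemma BTree.tfact_pos (t : BTree) : 0 < t.tfact := by
  induction t with
  | nil => exact Nat.one_pos
  | node l r ihl ihr => exact Nat.mul_pos (Nat.mul_pos (Nat.succ_pos _) ihl) ihr

lemma LTree.labels_card (u : LTree) : Multiset.card u.labels = u.shape.size := by
  induction u with
  | nil => rfl
  | node l r k ihl ihr => simp [labels, shape, BTree.size, ihl, ihr]

lemma split_unique (n : ℕ) : ∀ (a b a' b' : Multiset ℕ), Multiset.card a = n →
    Multiset.card a' = n → a + b = a' + b' →
    (∀ x ∈ a, ∀ y ∈ b, x < y) → (∀ x ∈ a', ∀ y ∈ b', x < y) → a = a' := by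
  induction n with
  | zero =>
    intro a b a' b' ha ha' _ _ _
    rw [Multiset.card_eq_zero] at ha ha'; rw [ha, ha']
  | succ n ih =>
    intro a b a' b' ha ha' hm hab hab'
    have hane : a ≠ 0 := by intro h; simp [h] at ha
    have hane' : a' ≠ 0 := by intro h; simp [h] at ha'
    obtain ⟨x₀, hx₀⟩ := Multiset.exists_mem_of_ne_zero hane
    obtain ⟨x₀', hx₀'⟩ := Multiset.exists_mem_of_ne_zero hane'
    have hmne : a + b ≠ 0 := by
      intro h
      have hc0 := congrArg Multiset.card h
      rw [Multiset.card_add, Multiset.card_zero] at hc0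
      omega
    have hTne : (a + b).toFinset.Nonempty := by
      obtain ⟨x, hx⟩ := Multiset.exists_mem_of_ne_zero hmne
      exact ⟨x, Multiset.mem_toFinset.mpr hx⟩
    set μ := (a + b).toFinset.min' hTne with hμdef
    have hμmem : μ ∈ a + b := Multiset.mem_toFinset.mp ((a+b).toFinset.min'_mem hTne)
    have hμle : ∀ x ∈ a + b, μ ≤ x := fun x hx =>
      (a+b).toFinset.min'_le x (Multiset.mem_toFinset.mpr hx)
    have hμa : μ ∈ a := by
      rcases Multiset.mem_add.mp hμmem with h | h
      · exact h
      · exact absurd (hab x₀ hx₀ μ h) (not_lt.mpr (hμle x₀ (Multiset.mem_add.mpr (Or.inl hx₀))))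
    have hμa' : μ ∈ a' := by
      rcases Multiset.mem_add.mp (hm ▸ hμmem) with h | h
      · exact h
      · exact absurd (hab' x₀' hx₀' μ h)
          (not_lt.mpr (hμle x₀' (hm ▸ Multiset.mem_add.mpr (Or.inl hx₀'))))
    have hsum : a.erase μ + b = a'.erase μ + b' := by
      have h1 : μ ::ₘ (a.erase μ + b) = μ ::ₘ (a'.erase μ + b') := by
        rw [← Multiset.cons_add, ← Multiset.cons_add, Multiset.cons_erase hμa,
          Multiset.cons_erase hμa', hm]
      exact (Multiset.cons_inj_right μ).mp h1
    have heq : a.erase μ = a'.erase μ := by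
      refine ih _ b _ b' ?_ ?_ hsum ?_ ?_
      · rw [Multiset.card_erase_of_mem hμa, ha]; rfl
      · rw [Multiset.card_erase_of_mem hμa', ha']; rfl
      · exact fun x hx => hab x (Multiset.mem_of_mem_erase hx)
      · exact fun x hx => hab' x (Multiset.mem_of_mem_erase hx)
    rw [← Multiset.cons_erase hμa, ← Multiset.cons_erase hμa', heq]

def lowPart (m : Multiset ℕ) (j : ℕ) : Multiset ℕ := ((m.sort (· ≤ ·)).take j : List ℕ)
def highPart (m : Multiset ℕ) (j : ℕ) : Multiset ℕ := ((m.sort (· ≤ ·)).drop j : List ℕ)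

lemma lowPart_add_highPart (m : Multiset ℕ) (j : ℕ) : lowPart m j + highPart m j = m := by
  rw [lowPart, highPart, Multiset.coe_add, List.take_append_drop, Multiset.sort_eq]

lemma sort_nodup {m : Multiset ℕ} (h : m.Nodup) : (m.sort (· ≤ ·)).Nodup := by
  have := Multiset.sort_eq m (· ≤ ·)
  rw [← this] at h
  exact Multiset.coe_nodup.mp h

lemma lowPart_nodup {m : Multiset ℕ} (h : m.Nodup) (j : ℕ) : (lowPart m j).Nodup :=
  Multiset.coe_nodup.mpr ((sort_nodup h).sublist (List.take_sublist _ _))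

lemma highPart_nodup {m : Multiset ℕ} (h : m.Nodup) (j : ℕ) : (highPart m j).Nodup :=
  Multiset.coe_nodup.mpr ((sort_nodup h).sublist (List.drop_sublist _ _))

lemma lowPart_card (m : Multiset ℕ) {j : ℕ} (h : j ≤ Multiset.card m) :
    Multiset.card (lowPart m j) = j := by
  rw [lowPart, Multiset.coe_card, List.length_take, Multiset.length_sort]
  omega

lemma highPart_card (m : Multiset ℕ) (j : ℕ) :
    Multiset.card (highPart m j) = Multiset.card m - j := by
  rw [highPart, Multiset.coe_card, List.length_drop, Multiset.length_sort]

lemma lowPart_cross {m : Multiset ℕ} (h : m.Nodup) (j : ℕ) :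
    ∀ x ∈ lowPart m j, ∀ y ∈ highPart m j, x < y := by
  have hsorted : (m.sort (· ≤ ·)).Pairwise (· < ·) := by
    have h1 := Multiset.pairwise_sort m (· ≤ ·)
    have h2 := sort_nodup h
    exact List.Pairwise.imp₂ (fun a b hle hne => lt_of_le_of_ne hle hne) h1 h2
  have := (List.take_append_drop j (m.sort (· ≤ ·))) ▸ hsorted
  have h3 := (List.pairwise_append.mp this).2.2
  intro x hx y hy
  exact h3 x (Multiset.mem_coe.mp hx) y (Multiset.mem_coe.mp hy)

lemma key (t : BTree) : ∀ (s : Multiset ℕ), s.Nodup → Multiset.card s = t.size →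
    Nat.card {u : LTree // u.shape = t ∧ u.AntiInc ∧ u.labels = s} = t.tfact := by
  induction t with
  | nil =>
    intro s hnd hc
    have hs : s = 0 := Multiset.card_eq_zero.mp hc
    subst hs
    haveI : Unique {u : LTree // u.shape = .nil ∧ u.AntiInc ∧ u.labels = 0} := by
      refine ⟨⟨⟨.nil, rfl, trivial, rfl⟩⟩, ?_⟩
      rintro ⟨u, hu1, hu2, hu3⟩
      cases u with
      | nil => rfl
      | node ul ur k => simp [LTree.shape] at hu1
    rw [Nat.card_unique]
    rfl
  | node l r ihl ihr =>
    intro s hnd hc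
    classical
    have hc' : Multiset.card s = l.size + r.size + 1 := hc
    set A : ℕ → Multiset ℕ := fun k => lowPart (s.erase k) l.size with hA
    set B : ℕ → Multiset ℕ := fun k => highPart (s.erase k) l.size with hB
    -- facts for k ∈ s
    have hek_card : ∀ k ∈ s, Multiset.card (s.erase k) = l.size + r.size := by
      intro k hk
      rw [Multiset.card_erase_of_mem hk, hc']
      rfl
    have hek_nd : ∀ k, (s.erase k).Nodup := fun k => hnd.erase k
    have hA_card : ∀ k ∈ s, Multiset.card (A k) = l.size := by
      intro k hk
      exact lowPart_card _ (by rw [hek_card k hk]; omega)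
    have hB_card : ∀ k ∈ s, Multiset.card (B k) = r.size := by
      intro k hk
      rw [hB]; simp only
      rw [highPart_card, hek_card k hk]
      omega
    have hAB : ∀ k, A k + B k = s.erase k := fun k => lowPart_add_highPart _ _
    have hcross : ∀ k, ∀ x ∈ A k, ∀ y ∈ B k, x < y := fun k => lowPart_cross (hek_nd k) _
    have hAnd : ∀ k, (A k).Nodup := fun k => lowPart_nodup (hek_nd k) _
    have hBnd : ∀ k, (B k).Nodup := fun k => highPart_nodup (hek_nd k) _
    set Y : ℕ → Type := fun k => {u : LTree // u.shape = l ∧ u.AntiInc ∧ u.labels = A k} with hY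
    set Z : ℕ → Type := fun k => {u : LTree // u.shape = r ∧ u.AntiInc ∧ u.labels = B k} with hZ
    set g : (Σ k : ↥s.toFinset, Y k.1 × Z k.1) →
        {u : LTree // u.shape = .node l r ∧ u.AntiInc ∧ u.labels = s} :=
      fun p => ⟨.node p.2.1.1 p.2.2.1 p.1.1, by
        obtain ⟨⟨k, hk⟩, ⟨ul, hl1, hl2, hl3⟩, ⟨ur, hr1, hr2, hr3⟩⟩ := p
        dsimp only at hl3 hr3 ⊢
        refine ⟨?_, ?_, ?_⟩
        · simp [LTree.shape, hl1, hr1]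
        · exact ⟨hl2, hr2, by rw [hl3, hr3]; exact hcross k⟩
        · show k ::ₘ (ul.labels + ur.labels) = s
          rw [hl3, hr3, hAB k,
            Multiset.cons_erase (Multiset.mem_toFinset.mp hk)]⟩ with hg
    have hginj : Function.Injective g := by
      rintro ⟨⟨k, hk⟩, ⟨ul, hul⟩, ⟨ur, hur⟩⟩ ⟨⟨k', hk'⟩, ⟨ul', hul'⟩, ⟨ur', hur'⟩⟩ h
      have h2 := congrArg Subtype.val h
      simp only [hg, LTree.node.injEq] at h2
      obtain ⟨h3, h4, h5⟩ := h2
      subst h3; subst h4; subst h5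
      rfl
    have hgsurj : Function.Surjective g := by
      rintro ⟨u, hu1, hu2, hu3⟩
      cases u with
      | nil => simp [LTree.shape] at hu1
      | node ul ur k =>
        simp only [LTree.shape, BTree.node.injEq] at hu1
        obtain ⟨hul, hur⟩ := hu1
        obtain ⟨hal, har, hcr⟩ := hu2
        rw [LTree.labels] at hu3
        have hk : k ∈ s := by rw [← hu3]; exact Multiset.mem_cons_self _ _
        have herase : ul.labels + ur.labels = s.erase k := by
          rw [← hu3, Multiset.erase_cons_head]
        have hulc : Multiset.card ul.labels = l.size := by
          rw [LTree.labels_card, hul]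
        have hulA : ul.labels = A k := by
          refine split_unique l.size ul.labels ur.labels (A k) (B k) hulc
            (hA_card k hk) ?_ hcr (hcross k)
          rw [herase, hAB k]
        have hurB : ur.labels = B k := by
          have h1 : ul.labels + ur.labels = ul.labels + B k := by
            rw [herase, ← hAB k, hulA]
          exact add_left_cancel h1
        exact ⟨⟨⟨k, Multiset.mem_toFinset.mpr hk⟩, ⟨ul, hul, hal, hulA⟩,
          ⟨ur, hur, har, hurB⟩⟩, rfl⟩
    haveI hfinY : ∀ k : ↥s.toFinset, Finite (Y k.1) := by
      intro k
      have hpos : 0 < Nat.card (Y k.1) := by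
        rw [hY]; simp only
        rw [ihl (A k.1) (hAnd k.1) (hA_card k.1 (Multiset.mem_toFinset.mp k.2))]
        exact l.tfact_pos
      exact (Nat.card_pos_iff.mp hpos).2
    haveI hfinZ : ∀ k : ↥s.toFinset, Finite (Z k.1) := by
      intro k
      have hpos : 0 < Nat.card (Z k.1) := by
        rw [hZ]; simp only
        rw [ihr (B k.1) (hBnd k.1) (hB_card k.1 (Multiset.mem_toFinset.mp k.2))]
        exact r.tfact_pos
      exact (Nat.card_pos_iff.mp hpos).2
    haveI : ∀ k : ↥s.toFinset, Fintype (Y k.1 × Z k.1) := fun k => Fintype.ofFinite _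
    calc Nat.card {u : LTree // u.shape = .node l r ∧ u.AntiInc ∧ u.labels = s}
        = Nat.card (Σ k : ↥s.toFinset, Y k.1 × Z k.1) :=
          (Nat.card_eq_of_bijective g ⟨hginj, hgsurj⟩).symm
      _ = ∑ k : ↥s.toFinset, Fintype.card (Y k.1 × Z k.1) := by
          rw [Nat.card_eq_fintype_card, Fintype.card_sigma]
      _ = ∑ k : ↥s.toFinset, l.tfact * r.tfact := by
          refine Finset.sum_congr rfl fun k _ => ?_
          rw [← Nat.card_eq_fintype_card, Nat.card_prod,
            ihl (A k.1) (hAnd k.1) (hA_card k.1 (Multiset.mem_toFinset.mp k.2)),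
            ihr (B k.1) (hBnd k.1) (hB_card k.1 (Multiset.mem_toFinset.mp k.2))]
      _ = s.toFinset.card * (l.tfact * r.tfact) := by
          rw [Finset.sum_const, smul_eq_mul, Finset.card_univ, Fintype.card_coe]
      _ = (l.size + r.size + 1) * l.tfact * r.tfact := by
          rw [Multiset.toFinset_card_of_nodup hnd, hc', mul_assoc]
      _ = (BTree.node l r).tfact := rfl


/-- For a planar rooted binary tree `t` with `n` vertices, the tree factorial `t!` equals
the number of anti-increasing labelings of `t` with the distinct numbers `1, 2, …, n`. -/
theorem tfact_eq_card_antiInc_labelings (t : BTree) :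
    t.tfact = Nat.card {u : LTree //
      u.shape = t ∧ u.AntiInc ∧ u.labels = (Finset.Icc 1 t.size).val} := by
  refine (key t (Finset.Icc 1 t.size).val (Finset.Icc 1 t.size).nodup ?_).symm
  rw [← Finset.card_def, Nat.card_Icc]
  omega
end

section
/- If a sequence of moments m_n has classical cumulants c_n, then its free cumulants are given by κ_n = Σ over connected partitions π of [n] of Π_{V ∈ π} c_{|V|}. -/
/-- A partition is noncrossing if no two distinct blocks cross. -/
def IsNoncrossing {n : ℕ} (P : Finset (Finset (Fin n))) : Prop :=
  ∀ B ∈ P, ∀ C ∈ P, B ≠ C →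
    ¬∃ a b c d : Fin n, a < b ∧ b < c ∧ c < d ∧ a ∈ B ∧ c ∈ B ∧ b ∈ C ∧ d ∈ C

open Finset

namespace FreeConn

variable {n : ℕ}

/-- `P` is a partition of the finset `S`. -/
def PartOn (S : Finset (Fin n)) (P : Finset (Finset (Fin n))) : Prop :=
  (∀ B ∈ P, B.Nonempty) ∧ (∀ B ∈ P, B ⊆ S) ∧ ∀ i ∈ S, ∃! B, B ∈ P ∧ i ∈ B

/-- `P` is a connected partition of `S` (relative intervals). -/
def ConnOn (S : Finset (Fin n)) (P : Finset (Finset (Fin n))) : Prop :=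
  ∀ a b : Fin n, (∀ B ∈ P, B ⊆ S ∩ Finset.Icc a b ∨ Disjoint B (S ∩ Finset.Icc a b)) →
    S ∩ Finset.Icc a b = ∅ ∨ S ∩ Finset.Icc a b = S

def Refines (P σ : Finset (Finset (Fin n))) : Prop := ∀ B ∈ P, ∃ W ∈ σ, B ⊆ W

def res (P : Finset (Finset (Fin n))) (W : Finset (Fin n)) : Finset (Finset (Fin n)) :=
  P.filter (· ⊆ W)

lemma mem_res {P : Finset (Finset (Fin n))} {W B : Finset (Fin n)} :
    B ∈ res P W ↔ B ∈ P ∧ B ⊆ W := by simp [res]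

lemma partOf_iff_partOn_univ {P : Finset (Finset (Fin n))} :
    IsPartitionOf P ↔ PartOn univ P := by
  constructor
  · rintro ⟨h1, h2⟩
    exact ⟨h1, fun B _ => B.subset_univ, fun i _ => h2 i⟩
  · rintro ⟨h1, _, h3⟩
    exact ⟨h1, fun i => h3 i (mem_univ i)⟩

lemma connected_iff_connOn_univ {P : Finset (Finset (Fin n))} :
    IsConnectedPartition P ↔ ConnOn univ P := by
  constructor
  · intro h a b hb
    rw [univ_inter] at hb ⊢
    exact h _ ⟨a, b, rfl⟩ hb
  · intro h s hs hb
    obtain ⟨a, b, rfl⟩ := hs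
    have := h a b (by rwa [univ_inter])
    rwa [univ_inter] at this

variable {S W B C : Finset (Fin n)} {P σ ρ : Finset (Finset (Fin n))}

lemma PartOn.nonempty_of_mem (h : PartOn S P) (hB : B ∈ P) : B.Nonempty := h.1 B hB

lemma PartOn.subset_of_mem (h : PartOn S P) (hB : B ∈ P) : B ⊆ S := h.2.1 B hB

lemma PartOn.eq_of_mem (h : PartOn S P) (hB : B ∈ P) (hC : C ∈ P) {i : Fin n}
    (hiB : i ∈ B) (hiC : i ∈ C) : B = C := by
  obtain ⟨D, _, hu⟩ := h.2.2 i (h.2.1 B hB hiB)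
  exact (hu B ⟨hB, hiB⟩).trans (hu C ⟨hC, hiC⟩).symm

lemma PartOn.disj (h : PartOn S P) (hB : B ∈ P) (hC : C ∈ P) (hne : B ≠ C) :
    Disjoint B C := by
  rw [Finset.disjoint_left]
  intro i hiB hiC
  exact hne (h.eq_of_mem hB hC hiB hiC)

lemma PartOn.exists_mem (h : PartOn S P) {i : Fin n} (hi : i ∈ S) : ∃ B ∈ P, i ∈ B := by
  obtain ⟨B, hB, _⟩ := h.2.2 i hi
  exact ⟨B, hB.1, hB.2⟩

lemma PartOn.card_le (h : PartOn S P) : P.card ≤ S.card := by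
  rcases P.eq_empty_or_nonempty with rfl | hP
  · simp
  obtain ⟨B₀, hB₀⟩ := hP
  obtain ⟨i₀, hi₀⟩ := h.1 B₀ hB₀
  have hi₀S : i₀ ∈ S := h.2.1 B₀ hB₀ hi₀
  classical
  refine Finset.card_le_card_of_injOn
    (fun B => if hB : B.Nonempty then hB.choose else i₀) ?_ ?_
  · intro B hB
    have hne : B.Nonempty := h.1 B hB
    simp only [dif_pos hne]
    exact h.2.1 B hB hne.choose_spec
  · intro B hB C hC hfe
    simp only [mem_coe] at hB hC
    have hneB : B.Nonempty := h.1 B hB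
    have hneC : C.Nonempty := h.1 C hC
    simp only [dif_pos hneB, dif_pos hneC] at hfe
    exact h.eq_of_mem hB hC hneB.choose_spec (hfe ▸ hneC.choose_spec)

lemma IsNoncrossing.subset (hPQ : P ⊆ σ) (h : IsNoncrossing σ) : IsNoncrossing P :=
  fun B hB C hC hne => h B (hPQ hB) C (hPQ hC) hne

/-- restriction of a refinement to a block of the coarser partition -/
lemma PartOn.res_partOn (hP : PartOn S P) (hσ : PartOn S σ) (href : Refines P σ)
    (hW : W ∈ σ) : PartOn W (res P W) := by
  refine ⟨fun B hB => hP.1 B (mem_res.1 hB).1, fun B hB => (mem_res.1 hB).2, ?_⟩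
  intro i hi
  have hiS : i ∈ S := hσ.2.1 W hW hi
  obtain ⟨B, ⟨hB, hiB⟩, hu⟩ := hP.2.2 i hiS
  have hBW : B ⊆ W := by
    obtain ⟨W', hW', hBW'⟩ := href B hB
    have : W' = W := hσ.eq_of_mem hW' hW (hBW' hiB) hi
    rwa [this] at hBW'
  refine ⟨B, ⟨mem_res.2 ⟨hB, hBW⟩, hiB⟩, ?_⟩
  rintro C ⟨hC, hiC⟩
  exact hu C ⟨(mem_res.1 hC).1, hiC⟩

lemma biUnion_res (hP : PartOn S P) (href : Refines P σ) :
    σ.biUnion (fun W => res P W) = P := by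
  classical
  ext B
  simp only [mem_biUnion, mem_res]
  constructor
  · rintro ⟨W, _, hB, _⟩; exact hB
  · intro hB
    obtain ⟨W, hW, hBW⟩ := href B hB
    exact ⟨W, hW, hB, hBW⟩


/-- Gluing partitions of the blocks of `σ` gives a partition of `S` refining `σ`. -/
lemma glue_partOn (hσ : PartOn S σ) {q : Finset (Fin n) → Finset (Finset (Fin n))}
    (hq : ∀ W ∈ σ, PartOn W (q W)) :
    PartOn S (σ.biUnion q) ∧ Refines (σ.biUnion q) σ ∧
      ∀ W ∈ σ, res (σ.biUnion q) W = q W := by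
  classical
  have hmem : ∀ B, B ∈ σ.biUnion q ↔ ∃ W ∈ σ, B ∈ q W := fun B => mem_biUnion
  have hpart : PartOn S (σ.biUnion q) := by
    refine ⟨?_, ?_, ?_⟩
    · intro B hB
      obtain ⟨W, hW, hBq⟩ := (hmem B).1 hB
      exact (hq W hW).1 B hBq
    · intro B hB
      obtain ⟨W, hW, hBq⟩ := (hmem B).1 hB
      exact ((hq W hW).2.1 B hBq).trans (hσ.2.1 W hW)
    · intro i hi
      obtain ⟨W, ⟨hW, hiW⟩, huW⟩ := hσ.2.2 i hi
      obtain ⟨B, ⟨hB, hiB⟩, huB⟩ := (hq W hW).2.2 i hiW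
      refine ⟨B, ⟨(hmem B).2 ⟨W, hW, hB⟩, hiB⟩, ?_⟩
      rintro C ⟨hC, hiC⟩
      obtain ⟨W', hW', hCq⟩ := (hmem C).1 hC
      have hiW' : i ∈ W' := (hq W' hW').2.1 C hCq hiC
      have : W' = W := huW W' ⟨hW', hiW'⟩
      subst this
      exact huB C ⟨hCq, hiC⟩
  refine ⟨hpart, ?_, ?_⟩
  · intro B hB
    obtain ⟨W, hW, hBq⟩ := (hmem B).1 hB
    exact ⟨W, hW, (hq W hW).2.1 B hBq⟩
  · intro W hW
    ext B
    rw [mem_res, hmem B]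
    constructor
    · rintro ⟨⟨W', hW', hBq⟩, hBW⟩
      have hne := (hq W' hW').1 B hBq
      obtain ⟨i, hiB⟩ := hne
      have : W' = W := hσ.eq_of_mem hW' hW ((hq W' hW').2.1 B hBq hiB) (hBW hiB)
      subst this; exact hBq
    · intro hBq
      exact ⟨⟨W, hW, hBq⟩, (hq W hW).2.1 B hBq⟩

/-- A noncrossing partition of `S` with at least two blocks has a proper interval block. -/
lemma exists_interval_block (hW : PartOn W σ) (hNC : IsNoncrossing σ) (h2 : 2 ≤ σ.card) :
    ∃ B ∈ σ, (∃ a b : Fin n, B = W ∩ Finset.Icc a b) ∧ B ≠ W := by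
  classical
  have hne : σ.attach.Nonempty := by
    rw [← Finset.card_pos, Finset.card_attach]; omega
  obtain ⟨⟨B, hB⟩, _, hmin⟩ := Finset.exists_min_image σ.attach
    (fun x => ((x.1.max' (hW.1 x.1 x.2)) : ℕ) - ((x.1.min' (hW.1 x.1 x.2)) : ℕ)) hne
  have hBne : B.Nonempty := hW.1 B hB
  set a := B.min' hBne with ha
  set b := B.max' hBne with hb
  have haB : a ∈ B := B.min'_mem hBne
  have hbB : b ∈ B := B.max'_mem hBne
  refine ⟨B, hB, ⟨a, b, ?_⟩, ?_⟩
  · apply Finset.Subset.antisymm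
    · intro x hx
      exact Finset.mem_inter.2 ⟨hW.2.1 B hB hx,
        Finset.mem_Icc.2 ⟨B.min'_le x hx, B.le_max' x hx⟩⟩
    · intro j hj
      obtain ⟨hjW, hjI⟩ := Finset.mem_inter.1 hj
      rw [Finset.mem_Icc] at hjI
      by_contra hjB
      obtain ⟨C, hC, hjC⟩ := hW.exists_mem hjW
      have hBC : B ≠ C := fun h => hjB (h ▸ hjC)
      have haj : a < j := lt_of_le_of_ne hjI.1 (fun h => hjB (h ▸ haB))
      have hjb : j < b := lt_of_le_of_ne hjI.2 (fun h => hjB (h.symm ▸ hbB))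
      have hCne : C.Nonempty := hW.1 C hC
      by_cases hCI : C ⊆ Finset.Icc a b
      · -- span of C strictly smaller
        have hmc : a ≤ C.min' hCne := (Finset.mem_Icc.1 (hCI (C.min'_mem hCne))).1
        have hMc : C.max' hCne ≤ b := (Finset.mem_Icc.1 (hCI (C.max'_mem hCne))).2
        have hmca : a ≠ C.min' hCne := fun h =>
          absurd (hW.eq_of_mem hB hC (h ▸ haB) (C.min'_mem hCne)) hBC
        have hmin' := hmin ⟨C, hC⟩ (Finset.mem_attach _ _)
        simp only at hmin'
        have h1 : (a : ℕ) < ((C.min' hCne : Fin n) : ℕ) :=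
          Fin.lt_def.mp (lt_of_le_of_ne hmc hmca)
        have h2' : ((C.max' hCne : Fin n) : ℕ) ≤ (b : ℕ) := Fin.le_def.mp hMc
        have h3 : ((C.min' hCne : Fin n) : ℕ) ≤ ((C.max' hCne : Fin n) : ℕ) :=
          Fin.le_def.mp (C.min'_le _ (C.max'_mem hCne))
        have h4 : (a : ℕ) ≤ (b : ℕ) := Fin.le_def.mp (B.min'_le b hbB)
        omega
      · obtain ⟨k, hkC, hkI⟩ := Finset.not_subset.1 hCI
        rw [Finset.mem_Icc, not_and_or, not_le, not_le] at hkI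
        rcases hkI with hk | hk
        · exact hNC C hC B hB hBC.symm ⟨k, a, j, b, hk, haj, hjb, hkC, hjC, haB, hbB⟩
        · exact hNC B hB C hC hBC ⟨a, j, b, k, haj, hjb, hk, haB, hbB, hjC, hkC⟩
  · intro hBW
    obtain ⟨C, hC, hCne⟩ : ∃ C ∈ σ, C ≠ B := by
      by_contra hcon
      push_neg at hcon
      have : σ ⊆ {B} := fun C hC => Finset.mem_singleton.2 (hcon C hC)
      have := Finset.card_le_card this
      simp at this; omega
    obtain ⟨x, hx⟩ := hW.1 C hC
    have hxB : x ∈ B := hBW ▸ hW.2.1 C hC hx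
    exact hCne (hW.eq_of_mem hC hB hx hxB)


/-- Splitting a block of a noncrossing partition along a relative interval. -/
lemma split_lemma (hσ : PartOn S σ) (hNC : IsNoncrossing σ) (hW : W ∈ σ) {a b : Fin n}
    (hs : (W ∩ Finset.Icc a b).Nonempty) (hsW : W ∩ Finset.Icc a b ≠ W) :
    PartOn S (insert (W ∩ Finset.Icc a b) (insert (W \ (W ∩ Finset.Icc a b)) (σ.erase W))) ∧
    IsNoncrossing (insert (W ∩ Finset.Icc a b) (insert (W \ (W ∩ Finset.Icc a b)) (σ.erase W))) ∧
    (insert (W ∩ Finset.Icc a b) (insert (W \ (W ∩ Finset.Icc a b)) (σ.erase W))).card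
      = σ.card + 1 := by
  classical
  set s := W ∩ Finset.Icc a b with hsdef
  set t := W \ s with htdef
  set σ' := insert s (insert t (σ.erase W)) with hσ'def
  have hsSubW : s ⊆ W := Finset.inter_subset_left
  have htSubW : t ⊆ W := Finset.sdiff_subset
  have hst : Disjoint s t := Finset.disjoint_sdiff
  have htne : t.Nonempty := by
    rw [htdef, Finset.sdiff_nonempty]
    intro hWs
    exact hsW (Finset.Subset.antisymm hsSubW hWs)
  have hmem' : ∀ X, X ∈ σ' ↔ X = s ∨ X = t ∨ (X ∈ σ ∧ X ≠ W) := by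
    intro X
    simp only [hσ'def, Finset.mem_insert, Finset.mem_erase]
    tauto
  have hsub' : ∀ X ∈ σ', X ⊆ W ∨ (X ∈ σ ∧ X ≠ W) := by
    intro X hX
    rcases (hmem' X).1 hX with rfl | rfl | h
    · exact Or.inl hsSubW
    · exact Or.inl htSubW
    · exact Or.inr h
  -- disjointness of distinct members of σ'
  have hdisj : ∀ X ∈ σ', ∀ Y ∈ σ', X ≠ Y → Disjoint X Y := by
    have hA : ∀ X ∈ σ', X ⊆ W ∨ Disjoint X W := by
      intro X hX
      rcases hsub' X hX with h | ⟨hXσ, hXW⟩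
      · exact Or.inl h
      · exact Or.inr (hσ.disj hXσ hW hXW)
    intro X hX Y hY hXY
    rcases (hmem' X).1 hX with rfl | rfl | ⟨hXσ, hXW⟩ <;>
      rcases (hmem' Y).1 hY with rfl | rfl | h
    · exact absurd rfl hXY
    · exact hst
    · exact Finset.disjoint_of_subset_left hsSubW ((hσ.disj hW h.1 (Ne.symm h.2)))
    · exact hst.symm
    · exact absurd rfl hXY
    · exact Finset.disjoint_of_subset_left htSubW ((hσ.disj hW h.1 (Ne.symm h.2)))
    · exact Finset.disjoint_of_subset_right hsSubW ((hσ.disj hXσ hW hXW))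
    · exact Finset.disjoint_of_subset_right htSubW ((hσ.disj hXσ hW hXW))
    · exact hσ.disj hXσ h.1 hXY
  have hpart : PartOn S σ' := by
    refine ⟨?_, ?_, ?_⟩
    · intro X hX
      rcases (hmem' X).1 hX with rfl | rfl | h
      · exact hs
      · exact htne
      · exact hσ.1 X h.1
    · intro X hX
      rcases hsub' X hX with h | h
      · exact h.trans (hσ.2.1 W hW)
      · exact hσ.2.1 X h.1
    · intro i hi
      obtain ⟨X, ⟨hXσ, hiX⟩, huX⟩ := hσ.2.2 i hi
      by_cases hXW : X = W
      · subst hXW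
        by_cases his : i ∈ s
        · refine ⟨s, ⟨(hmem' s).2 (Or.inl rfl), his⟩, ?_⟩
          rintro Y ⟨hY, hiY⟩
          by_contra hne
          exact Finset.disjoint_left.1
            (hdisj Y hY s ((hmem' s).2 (Or.inl rfl)) hne) hiY his
        · have hit : i ∈ t := Finset.mem_sdiff.2 ⟨hiX, his⟩
          refine ⟨t, ⟨(hmem' t).2 (Or.inr (Or.inl rfl)), hit⟩, ?_⟩
          rintro Y ⟨hY, hiY⟩
          by_contra hne
          exact Finset.disjoint_left.1
            (hdisj Y hY t ((hmem' t).2 (Or.inr (Or.inl rfl))) hne) hiY hit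
      · refine ⟨X, ⟨(hmem' X).2 (Or.inr (Or.inr ⟨hXσ, hXW⟩)), hiX⟩, ?_⟩
        rintro Y ⟨hY, hiY⟩
        by_contra hne
        exact Finset.disjoint_left.1
          (hdisj Y hY X ((hmem' X).2 (Or.inr (Or.inr ⟨hXσ, hXW⟩))) hne) hiY hiX
  refine ⟨hpart, ?_, ?_⟩
  · -- noncrossing
    intro X hX Y hY hXY
    rintro ⟨x, y, z, w, hxy, hyz, hzw, hxX, hzX, hyY, hwY⟩
    -- helper: crossing with a subset of W gives crossing with W
    have key : ∀ {X : Finset (Fin n)}, X ∈ σ → X ≠ W →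
        (∃ x y z w : Fin n, x < y ∧ y < z ∧ z < w ∧ x ∈ X ∧ z ∈ X ∧ y ∈ W ∧ w ∈ W) → False := by
      rintro X hXσ hXW hcr
      exact hNC X hXσ W hW hXW hcr
    have key2 : ∀ {X : Finset (Fin n)}, X ∈ σ → X ≠ W →
        (∃ x y z w : Fin n, x < y ∧ y < z ∧ z < w ∧ x ∈ W ∧ z ∈ W ∧ y ∈ X ∧ w ∈ X) → False := by
      rintro X hXσ hXW hcr
      exact hNC W hW X hXσ (Ne.symm hXW) hcr
    rcases (hmem' X).1 hX with rfl | rfl | ⟨hXσ, hXW⟩ <;>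
      rcases (hmem' Y).1 hY with hY' | hY' | hY'
    · exact hXY (hY' ▸ rfl)
    · -- X = s, Y = t : x,z ∈ s, y ∈ t ⊆ W, y between x z so y ∈ Icc a b, y ∈ s contra
      subst hY'
      have hxI := (Finset.mem_inter.1 hxX).2
      have hzI := (Finset.mem_inter.1 hzX).2
      rw [Finset.mem_Icc] at hxI hzI
      have hyI : y ∈ Finset.Icc a b :=
        Finset.mem_Icc.2 ⟨hxI.1.trans hxy.le, hyz.le.trans hzI.2⟩
      have : y ∈ s := Finset.mem_inter.2 ⟨(Finset.mem_sdiff.1 hyY).1, hyI⟩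
      exact (Finset.mem_sdiff.1 hyY).2 this
    · -- X = s, Y old : crossing s vs Y gives crossing W vs Y
      exact key2 hY'.1 hY'.2 ⟨x, y, z, w, hxy, hyz, hzw, hsSubW hxX, hsSubW hzX, hyY, hwY⟩
    · -- X = t, Y = s : x,z ∈ t, y,w ∈ s; z between y,w → z ∈ Icc
      subst hY'
      have hyI := (Finset.mem_inter.1 hyY).2
      have hwI := (Finset.mem_inter.1 hwY).2
      rw [Finset.mem_Icc] at hyI hwI
      have hzI : z ∈ Finset.Icc a b :=
        Finset.mem_Icc.2 ⟨hyI.1.trans hyz.le, hzw.le.trans hwI.2⟩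
      have : z ∈ s := Finset.mem_inter.2 ⟨(Finset.mem_sdiff.1 hzX).1, hzI⟩
      exact (Finset.mem_sdiff.1 hzX).2 this
    · exact hXY (hY' ▸ rfl)
    · exact key2 hY'.1 hY'.2 ⟨x, y, z, w, hxy, hyz, hzw, htSubW hxX, htSubW hzX, hyY, hwY⟩
    · subst hY'
      exact key hXσ hXW ⟨x, y, z, w, hxy, hyz, hzw, hxX, hzX, hsSubW hyY, hsSubW hwY⟩
    · subst hY'
      exact key hXσ hXW ⟨x, y, z, w, hxy, hyz, hzw, hxX, hzX, htSubW hyY, htSubW hwY⟩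
    · exact hNC X hXσ Y hY'.1 hXY ⟨x, y, z, w, hxy, hyz, hzw, hxX, hzX, hyY, hwY⟩
  · -- cardinality
    have hsne : s ∉ insert t (σ.erase W) := by
      simp only [Finset.mem_insert, Finset.mem_erase]
      rintro (h | ⟨hne, hmem⟩)
      · obtain ⟨x, hx⟩ := hs
        exact (Finset.mem_sdiff.1 (htdef ▸ (h ▸ hx))).2 hx
      · exact absurd (Finset.Subset.antisymm hsSubW
          (by
            by_contra hns
            have := hσ.disj hmem hW hne
            obtain ⟨x, hx⟩ := hs
            exact (Finset.disjoint_left.1 this hx) (hsSubW hx))) hsW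
    have htne' : t ∉ σ.erase W := by
      simp only [Finset.mem_erase]
      rintro ⟨hne, hmem⟩
      have := hσ.disj hmem hW hne
      obtain ⟨x, hx⟩ := htne
      exact (Finset.disjoint_left.1 this hx) (htSubW hx)
    rw [Finset.card_insert_of_notMem hsne, Finset.card_insert_of_notMem htne',
      Finset.card_erase_of_mem hW]
    have : 1 ≤ σ.card := Finset.card_pos.2 ⟨W, hW⟩
    omega


/-- Existence of a noncrossing coarsening with connected restrictions. -/
lemma exists_decomp (hP : PartOn S P) (hS : S.Nonempty) :
    ∃ σ, PartOn S σ ∧ IsNoncrossing σ ∧ Refines P σ ∧ ∀ W ∈ σ, ConnOn W (res P W) := by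
  classical
  suffices h : ∀ k (σ : Finset (Finset (Fin n))), PartOn S σ → IsNoncrossing σ →
      Refines P σ → S.card - σ.card ≤ k →
      ∃ σ', PartOn S σ' ∧ IsNoncrossing σ' ∧ Refines P σ' ∧
        ∀ W ∈ σ', ConnOn W (res P W) by
    refine h S.card {S} ?_ ?_ ?_ ?_
    · exact ⟨fun B hB => (Finset.mem_singleton.1 hB) ▸ hS,
        fun B hB => (Finset.mem_singleton.1 hB) ▸ Finset.Subset.refl S,
        fun i hi => ⟨S, ⟨Finset.mem_singleton_self S, hi⟩,
          fun C hC => Finset.mem_singleton.1 hC.1⟩⟩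
    · intro B hB C hC hne
      exact absurd ((Finset.mem_singleton.1 hB).trans (Finset.mem_singleton.1 hC).symm) hne
    · exact fun B hB => ⟨S, Finset.mem_singleton_self S, hP.2.1 B hB⟩
    · omega
  intro k
  induction k with
  | zero =>
    intro σ hσ hNC href hcard
    by_cases hconn : ∀ W ∈ σ, ConnOn W (res P W)
    · exact ⟨σ, hσ, hNC, href, hconn⟩
    · exfalso
      push_neg at hconn
      obtain ⟨W, hW, hnc⟩ := hconn
      rw [ConnOn] at hnc
      push_neg at hnc
      obtain ⟨a, b, hcond, hne, hneW⟩ := hnc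
      have hsplit := split_lemma hσ hNC hW hne hneW
      have hle := hsplit.1.card_le
      have hle2 := hσ.card_le
      omega
  | succ k ih =>
    intro σ hσ hNC href hcard
    by_cases hconn : ∀ W ∈ σ, ConnOn W (res P W)
    · exact ⟨σ, hσ, hNC, href, hconn⟩
    · push_neg at hconn
      obtain ⟨W, hW, hnc⟩ := hconn
      rw [ConnOn] at hnc
      push_neg at hnc
      obtain ⟨a, b, hcond, hne, hneW⟩ := hnc
      obtain ⟨hpart', hNC', hcard'⟩ :=
        split_lemma hσ hNC hW hne hneW
      set s := W ∩ Finset.Icc a b with hsdef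
      -- refinement into the split partition
      have href' : Refines P (insert s (insert (W \ s) (σ.erase W))) := by
        intro B hB
        obtain ⟨W', hW', hBW'⟩ := href B hB
        by_cases hWW : W' = W
        · subst hWW
          have hBres : B ∈ res P W' := mem_res.2 ⟨hB, hBW'⟩
          rcases hcond B hBres with h | h
          · exact ⟨s, Finset.mem_insert_self _ _, h⟩
          · refine ⟨W' \ s, Finset.mem_insert.2 (Or.inr (Finset.mem_insert_self _ _)), ?_⟩
            intro x hx
            exact Finset.mem_sdiff.2 ⟨hBW' hx, Finset.disjoint_left.1 h hx⟩
        · exact ⟨W', Finset.mem_insert.2 (Or.inr (Finset.mem_insert.2 (Or.inr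
            (Finset.mem_erase.2 ⟨hWW, hW'⟩)))), hBW'⟩
      refine ih _ hpart' hNC' href' ?_
      have hle := hpart'.card_le
      omega


/-- If `ρ` is a noncrossing coarsening of `P` refining `σ`, where `σ` has connected
restrictions, then `ρ = σ`. -/
lemma eq_of_refines_conn (hP : PartOn S P) (hρ : PartOn S ρ) (hρNC : IsNoncrossing ρ)
    (hPρ : Refines P ρ) (hρσ : Refines ρ σ) (hσ : PartOn S σ)
    (hconn : ∀ W ∈ σ, ConnOn W (res P W)) : ρ = σ := by
  classical
  -- every block of σ is a block of ρ
  have hblocks : ∀ W ∈ σ, W ∈ ρ := by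
    intro W hW
    have hR : PartOn W (res ρ W) := hρ.res_partOn hσ hρσ hW
    have hRNC : IsNoncrossing (res ρ W) :=
      IsNoncrossing.subset (Finset.filter_subset _ _) hρNC
    have hRcard : (res ρ W).card ≤ 1 := by
      by_contra hc
      push_neg at hc
      obtain ⟨B, hB, ⟨a, b, hBint⟩, hBW⟩ := exists_interval_block hR hRNC hc
      have hBρ := (mem_res.1 hB).1
      have hBne : B.Nonempty := hρ.1 B hBρ
      -- B is a union of blocks of res P W
      have hcond : ∀ D ∈ res P W, D ⊆ W ∩ Finset.Icc a b ∨
          Disjoint D (W ∩ Finset.Icc a b) := by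
        intro D hD
        obtain ⟨hDP, hDW⟩ := mem_res.1 hD
        obtain ⟨X, hXρ, hDX⟩ := hPρ D hDP
        obtain ⟨W', hW', hXW'⟩ := hρσ X hXρ
        have hDne : D.Nonempty := hP.1 D hDP
        obtain ⟨i, hi⟩ := hDne
        have hWW' : W' = W := hσ.eq_of_mem hW' hW (hXW' (hDX hi)) (hDW hi)
        have hXW : X ⊆ W := hWW' ▸ hXW'
        have hXres : X ∈ res ρ W := mem_res.2 ⟨hXρ, hXW⟩
        by_cases hXB : X = B
        · exact Or.inl (hBint ▸ hXB ▸ hDX)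
        · exact Or.inr (Finset.disjoint_of_subset_left hDX
            (hBint ▸ hR.disj hXres hB hXB))
      rcases hconn W hW a b hcond with h | h
      · exact absurd (hBint ▸ h) (Finset.nonempty_iff_ne_empty.1 hBne)
      · exact hBW (hBint.trans h)
    have hRne : (res ρ W).Nonempty := by
      obtain ⟨i, hi⟩ := hσ.1 W hW
      obtain ⟨X, hXρ, hiX⟩ := hρ.exists_mem (hσ.2.1 W hW hi)
      obtain ⟨W', hW', hXW'⟩ := hρσ X hXρ
      have : W' = W := hσ.eq_of_mem hW' hW (hXW' hiX) hi
      exact ⟨X, mem_res.2 ⟨hXρ, this ▸ hXW'⟩⟩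
    obtain ⟨X, hX⟩ := Finset.card_eq_one.1
      (le_antisymm hRcard (Finset.card_pos.2 hRne))
    have hXρ : X ∈ res ρ W := hX ▸ Finset.mem_singleton_self X
    have hXW : X = W := by
      apply Finset.Subset.antisymm (mem_res.1 hXρ).2
      intro i hi
      obtain ⟨Y, hY, hiY⟩ := (hρ.res_partOn hσ hρσ hW).exists_mem hi
      rw [hX, Finset.mem_singleton] at hY
      exact hY ▸ hiY
    exact hXW ▸ (mem_res.1 hXρ).1
  -- and conversely ρ ⊆ σ
  apply Finset.Subset.antisymm
  · intro X hX
    obtain ⟨W, hW, hXW⟩ := hρσ X hX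
    obtain ⟨i, hi⟩ := hρ.1 X hX
    have : X = W := hρ.eq_of_mem hX (hblocks W hW) hi (hXW hi)
    exact this ▸ hW
  · exact fun W hW => hblocks W hW

/-- Uniqueness of the noncrossing decomposition. -/
lemma decomp_unique {σ' : Finset (Finset (Fin n))} (hP : PartOn S P)
    (hσ : PartOn S σ) (hσNC : IsNoncrossing σ) (hσref : Refines P σ)
    (hσconn : ∀ W ∈ σ, ConnOn W (res P W))
    (hσ' : PartOn S σ') (hσNC' : IsNoncrossing σ') (hσref' : Refines P σ')
    (hσconn' : ∀ W ∈ σ', ConnOn W (res P W)) : σ = σ' := by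
  classical
  -- the meet of σ and σ'
  set ρ := ((σ ×ˢ σ').image fun q => q.1 ∩ q.2).filter (·.Nonempty) with hρdef
  have hmem : ∀ X, X ∈ ρ ↔ (∃ W ∈ σ, ∃ W' ∈ σ', W ∩ W' = X) ∧ X.Nonempty := by
    intro X
    simp only [hρdef, Finset.mem_filter, Finset.mem_image, Finset.mem_product, Prod.exists]
    constructor
    · rintro ⟨⟨W, W', ⟨hW, hW'⟩, hXe⟩, hne⟩
      exact ⟨⟨W, hW, W', hW', hXe⟩, hne⟩
    · rintro ⟨⟨W, hW, W', hW', hXe⟩, hne⟩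
      exact ⟨⟨W, W', ⟨hW, hW'⟩, hXe⟩, hne⟩
  have hρpart : PartOn S ρ := by
    refine ⟨fun X hX => ((hmem X).1 hX).2, ?_, ?_⟩
    · intro X hX
      obtain ⟨⟨W, hW, W', hW', rfl⟩, _⟩ := (hmem X).1 hX
      exact Finset.inter_subset_left.trans (hσ.2.1 W hW)
    · intro i hi
      obtain ⟨W, ⟨hW, hiW⟩, huW⟩ := hσ.2.2 i hi
      obtain ⟨W', ⟨hW', hiW'⟩, huW'⟩ := hσ'.2.2 i hi
      refine ⟨W ∩ W', ⟨(hmem _).2 ⟨⟨W, hW, W', hW', rfl⟩, ⟨i, Finset.mem_inter.2 ⟨hiW, hiW'⟩⟩⟩,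
        Finset.mem_inter.2 ⟨hiW, hiW'⟩⟩, ?_⟩
      rintro Y ⟨hY, hiY⟩
      obtain ⟨⟨V, hV, V', hV', rfl⟩, _⟩ := (hmem Y).1 hY
      have h1 : V = W := huW V ⟨hV, (Finset.mem_inter.1 hiY).1⟩
      have h2 : V' = W' := huW' V' ⟨hV', (Finset.mem_inter.1 hiY).2⟩
      rw [h1, h2]
  have hρNC : IsNoncrossing ρ := by
    intro X hX Y hY hXY
    rintro ⟨x, y, z, w, hxy, hyz, hzw, hxX, hzX, hyY, hwY⟩
    obtain ⟨⟨W₁, hW₁, W₁', hW₁', rfl⟩, _⟩ := (hmem X).1 hX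
    obtain ⟨⟨W₂, hW₂, W₂', hW₂', rfl⟩, _⟩ := (hmem Y).1 hY
    have h1 : W₁ = W₂ := by
      by_contra hne
      exact hσNC W₁ hW₁ W₂ hW₂ hne ⟨x, y, z, w, hxy, hyz, hzw,
        (Finset.mem_inter.1 hxX).1, (Finset.mem_inter.1 hzX).1,
        (Finset.mem_inter.1 hyY).1, (Finset.mem_inter.1 hwY).1⟩
    have h2 : W₁' = W₂' := by
      by_contra hne
      exact hσNC' W₁' hW₁' W₂' hW₂' hne ⟨x, y, z, w, hxy, hyz, hzw,
        (Finset.mem_inter.1 hxX).2, (Finset.mem_inter.1 hzX).2,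
        (Finset.mem_inter.1 hyY).2, (Finset.mem_inter.1 hwY).2⟩
    exact hXY (by rw [h1, h2])
  have hPρ : Refines P ρ := by
    intro D hD
    obtain ⟨W, hW, hDW⟩ := hσref D hD
    obtain ⟨W', hW', hDW'⟩ := hσref' D hD
    have hDne : D.Nonempty := hP.1 D hD
    refine ⟨W ∩ W', (hmem _).2 ⟨⟨W, hW, W', hW', rfl⟩, ?_⟩, ?_⟩
    · obtain ⟨i, hi⟩ := hDne
      exact ⟨i, Finset.mem_inter.2 ⟨hDW hi, hDW' hi⟩⟩
    · exact fun x hx => Finset.mem_inter.2 ⟨hDW hx, hDW' hx⟩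
  have hρσ : Refines ρ σ := by
    intro X hX
    obtain ⟨⟨W, hW, W', hW', rfl⟩, _⟩ := (hmem X).1 hX
    exact ⟨W, hW, Finset.inter_subset_left⟩
  have hρσ' : Refines ρ σ' := by
    intro X hX
    obtain ⟨⟨W, hW, W', hW', rfl⟩, _⟩ := (hmem X).1 hX
    exact ⟨W', hW', Finset.inter_subset_right⟩
  have e1 : ρ = σ := eq_of_refines_conn hP hρpart hρNC hPρ hρσ hσ hσconn
  have e2 : ρ = σ' := eq_of_refines_conn hP hρpart hρNC hPρ hρσ' hσ' hσconn'
  rw [← e1, e2]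


section Relabel

variable (W : Finset (Fin n))

/-- the order embedding enumerating `W` -/
noncomputable def emb : Fin W.card ↪o Fin n := W.orderEmbOfFin rfl

noncomputable def up (B : Finset (Fin W.card)) : Finset (Fin n) := B.image (emb W)

noncomputable def UPf (τ : Finset (Finset (Fin W.card))) : Finset (Finset (Fin n)) :=
  τ.image (up W)

lemma emb_mem (j : Fin W.card) : emb W j ∈ W := Finset.orderEmbOfFin_mem W rfl j

lemma emb_inj : Function.Injective (emb W) := (emb W).injective

lemma exists_emb {i : Fin n} (hi : i ∈ W) : ∃ j, emb W j = i := by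
  have : i ∈ Set.range (W.orderEmbOfFin rfl) := by
    rw [Finset.range_orderEmbOfFin]; exact hi
  exact this

lemma up_inj : Function.Injective (up W) :=
  fun A B h => Finset.image_injective (emb_inj W) h

lemma mem_up {B : Finset (Fin W.card)} {j : Fin W.card} : emb W j ∈ up W B ↔ j ∈ B := by
  simp only [up, Finset.mem_image]
  exact ⟨fun ⟨j', hj', he⟩ => (emb_inj W he) ▸ hj', fun h => ⟨j, h, rfl⟩⟩

lemma up_subset {B : Finset (Fin W.card)} : up W B ⊆ W := by
  intro i hi
  obtain ⟨j, _, rfl⟩ := Finset.mem_image.1 hi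
  exact emb_mem W j

lemma card_up (B : Finset (Fin W.card)) : (up W B).card = B.card :=
  Finset.card_image_of_injective B (emb_inj W)

lemma up_subset_iff {A B : Finset (Fin W.card)} : up W A ⊆ up W B ↔ A ⊆ B :=
  Finset.image_subset_image_iff (emb_inj W)

lemma up_disjoint_iff {A B : Finset (Fin W.card)} :
    Disjoint (up W A) (up W B) ↔ Disjoint A B := by
  unfold up
  rw [Finset.disjoint_image (emb_inj W)]

lemma up_nonempty_iff {B : Finset (Fin W.card)} : (up W B).Nonempty ↔ B.Nonempty :=
  Finset.image_nonempty

lemma up_univ : up W Finset.univ = W := by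
  apply Finset.Subset.antisymm (up_subset W)
  intro i hi
  obtain ⟨j, rfl⟩ := exists_emb W hi
  exact Finset.mem_image.2 ⟨j, Finset.mem_univ j, rfl⟩

lemma up_icc (a b : Fin W.card) :
    up W (Finset.Icc a b) = W ∩ Finset.Icc (emb W a) (emb W b) := by
  ext i
  simp only [up, Finset.mem_image, Finset.mem_inter, Finset.mem_Icc]
  constructor
  · rintro ⟨j, hj, rfl⟩
    exact ⟨emb_mem W j, (emb W).le_iff_le.2 hj.1, (emb W).le_iff_le.2 hj.2⟩
  · rintro ⟨hiW, h1, h2⟩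
    obtain ⟨j, rfl⟩ := exists_emb W hiW
    exact ⟨j, ⟨(emb W).le_iff_le.1 h1, (emb W).le_iff_le.1 h2⟩, rfl⟩

variable {W}

lemma part_transfer {τ : Finset (Finset (Fin W.card))} :
    IsPartitionOf τ ↔ PartOn W (UPf W τ) := by
  constructor
  · rintro ⟨h1, h2⟩
    refine ⟨?_, ?_, ?_⟩
    · intro B hB
      obtain ⟨B₀, hB₀, rfl⟩ := Finset.mem_image.1 hB
      exact (up_nonempty_iff W).2 (h1 B₀ hB₀)
    · intro B hB
      obtain ⟨B₀, hB₀, rfl⟩ := Finset.mem_image.1 hB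
      exact up_subset W
    · intro i hi
      obtain ⟨j, rfl⟩ := exists_emb W hi
      obtain ⟨B₀, ⟨hB₀, hjB₀⟩, hu⟩ := h2 j
      refine ⟨up W B₀, ⟨Finset.mem_image.2 ⟨B₀, hB₀, rfl⟩, (mem_up W).2 hjB₀⟩, ?_⟩
      rintro C ⟨hC, hjC⟩
      obtain ⟨C₀, hC₀, rfl⟩ := Finset.mem_image.1 hC
      exact congrArg (up W) (hu C₀ ⟨hC₀, (mem_up W).1 hjC⟩)
  · rintro ⟨h1, h2, h3⟩
    refine ⟨?_, ?_⟩
    · intro B hB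
      exact (up_nonempty_iff W).1 (h1 (up W B) (Finset.mem_image.2 ⟨B, hB, rfl⟩))
    · intro j
      obtain ⟨C, ⟨hC, hjC⟩, hu⟩ := h3 (emb W j) (emb_mem W j)
      obtain ⟨C₀, hC₀, rfl⟩ := Finset.mem_image.1 hC
      refine ⟨C₀, ⟨hC₀, (mem_up W).1 hjC⟩, ?_⟩
      rintro B ⟨hB, hjB⟩
      have := hu (up W B) ⟨Finset.mem_image.2 ⟨B, hB, rfl⟩, (mem_up W).2 hjB⟩
      exact up_inj W this

lemma conn_transfer {τ : Finset (Finset (Fin W.card))} :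
    IsConnectedPartition τ ↔ ConnOn W (UPf W τ) := by
  constructor
  · intro h a' b' hcond
    by_cases hne : W ∩ Finset.Icc a' b' = ∅
    · exact Or.inl hne
    · have hne' : (W ∩ Finset.Icc a' b').Nonempty := Finset.nonempty_iff_ne_empty.2 hne
      set s' := W ∩ Finset.Icc a' b' with hs'def
      have hminW : s'.min' hne' ∈ W := (Finset.mem_inter.1 (s'.min'_mem hne')).1
      have hmaxW : s'.max' hne' ∈ W := (Finset.mem_inter.1 (s'.max'_mem hne')).1
      obtain ⟨a, ha⟩ := exists_emb W hminW
      obtain ⟨b, hb⟩ := exists_emb W hmaxW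
      have hseq : s' = up W (Finset.Icc a b) := by
        rw [up_icc, ha, hb]
        ext x
        simp only [Finset.mem_inter, Finset.mem_Icc]
        constructor
        · intro hx
          have hxs : x ∈ s' := hs'def ▸ hx
          exact ⟨(Finset.mem_inter.1 hx).1, s'.min'_le x hxs, s'.le_max' x hxs⟩
        · rintro ⟨hxW, h1, h2⟩
          have hmin := (Finset.mem_inter.1 (s'.min'_mem hne')).2
          have hmax := (Finset.mem_inter.1 (s'.max'_mem hne')).2
          rw [Finset.mem_Icc] at hmin hmax
          exact Finset.mem_inter.2 ⟨hxW, Finset.mem_Icc.2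
            ⟨hmin.1.trans h1, h2.trans hmax.2⟩⟩
      have hcond' : ∀ B ∈ τ, B ⊆ Finset.Icc a b ∨ Disjoint B (Finset.Icc a b) := by
        intro B hB
        rcases hcond (up W B) (Finset.mem_image.2 ⟨B, hB, rfl⟩) with hc | hc
        · exact Or.inl ((up_subset_iff W).1 (hseq ▸ hc))
        · exact Or.inr ((up_disjoint_iff W).1 (hseq ▸ hc))
      rcases h (Finset.Icc a b) ⟨a, b, rfl⟩ hcond' with hc | hc
      · left; rw [hseq, hc]; simp [up]
      · right; rw [hseq, hc, up_univ]
  · intro h s hs hcond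
    obtain ⟨a, b, rfl⟩ := hs
    have hcond' : ∀ B ∈ UPf W τ, B ⊆ W ∩ Finset.Icc (emb W a) (emb W b) ∨
        Disjoint B (W ∩ Finset.Icc (emb W a) (emb W b)) := by
      intro B hB
      obtain ⟨B₀, hB₀, rfl⟩ := Finset.mem_image.1 hB
      rw [← up_icc]
      rcases hcond B₀ hB₀ with hc | hc
      · exact Or.inl ((up_subset_iff W).2 hc)
      · exact Or.inr ((up_disjoint_iff W).2 hc)
    rcases h (emb W a) (emb W b) hcond' with hc | hc
    · left
      rw [← up_icc] at hc
      by_contra hne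
      obtain ⟨x, hx⟩ := Finset.nonempty_iff_ne_empty.2 hne
      have : emb W x ∈ up W (Finset.Icc a b) := (mem_up W).2 hx
      rw [hc] at this
      exact absurd this (Finset.notMem_empty _)
    · right
      apply up_inj W
      rw [up_icc, up_univ]
      exact hc

lemma weight_up (c : ℕ → ℝ) {τ : Finset (Finset (Fin W.card))} :
    ∏ B ∈ UPf W τ, c B.card = ∏ B ∈ τ, c B.card := by
  rw [UPf, Finset.prod_image (fun x _ y _ h => up_inj W h)]
  exact Finset.prod_congr rfl fun B _ => by rw [card_up]

noncomputable def down (B : Finset (Fin n)) : Finset (Fin W.card) :=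
  Finset.univ.filter (fun j => emb W j ∈ B)

noncomputable def DOWNf (T : Finset (Finset (Fin n))) : Finset (Finset (Fin W.card)) :=
  T.image (down (W := W))

lemma down_up (B : Finset (Fin W.card)) : down (W := W) (up W B) = B := by
  ext j
  simp only [down, Finset.mem_filter, Finset.mem_univ, true_and]
  exact mem_up W

lemma up_down {B : Finset (Fin n)} (hB : B ⊆ W) : up W (down (W := W) B) = B := by
  ext i
  simp only [up, down, Finset.mem_image, Finset.mem_filter, Finset.mem_univ, true_and]
  constructor
  · rintro ⟨j, hj, rfl⟩; exact hj
  · intro hi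
    obtain ⟨j, rfl⟩ := exists_emb W (hB hi)
    exact ⟨j, hi, rfl⟩

lemma DOWN_UP (τ : Finset (Finset (Fin W.card))) : DOWNf (W := W) (UPf W τ) = τ := by
  rw [DOWNf, UPf, Finset.image_image]
  have : (down (W := W)) ∘ (up W) = id := funext (down_up (W := W))
  rw [this, Finset.image_id]

lemma UP_DOWN {T : Finset (Finset (Fin n))} (hT : ∀ B ∈ T, B ⊆ W) :
    UPf W (DOWNf (W := W) T) = T := by
  rw [UPf, DOWNf, Finset.image_image]
  rw [Finset.image_congr (fun B hB => by
    simp only [Function.comp_apply]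
    exact up_down (hT B hB)), Finset.image_id']

end Relabel



lemma sigma_helper {γ δ : Type*} {a b : Finset γ} {f : ∀ x ∈ a, δ} {g : ∀ x ∈ b, δ}
    (h : a = b) (h2 : ∀ x (hx : x ∈ b), f x (h ▸ hx) = g x hx) :
    (⟨a, f⟩ : Σ s : Finset γ, ∀ x ∈ s, δ) = ⟨b, g⟩ := by
  subst h
  exact congrArg _ (funext fun x => funext fun hx => h2 x hx)

open scoped Classical in
/-- the "connected classical cumulant" polynomial -/
noncomputable def kc (c : ℕ → ℝ) (k : ℕ) : ℝ :=
  ∑ τ ∈ Finset.univ.filter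
    (fun τ : Finset (Finset (Fin k)) => IsPartitionOf τ ∧ IsConnectedPartition τ),
    ∏ B ∈ τ, c B.card

open scoped Classical in
noncomputable def KW (c : ℕ → ℝ) (W : Finset (Fin n)) : ℝ :=
  ∑ T ∈ Finset.univ.filter
    (fun T : Finset (Finset (Fin n)) => PartOn W T ∧ ConnOn W T),
    ∏ B ∈ T, c B.card

open scoped Classical in
lemma KW_eq_kc (c : ℕ → ℝ) (W : Finset (Fin n)) : KW c W = kc c W.card := by
  rw [KW, kc]
  refine Finset.sum_bij' (fun T _ => DOWNf (W := W) T) (fun τ _ => UPf W τ)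
    ?_ ?_ ?_ ?_ ?_
  · intro T hT
    obtain ⟨hTpart, hTconn⟩ := (Finset.mem_filter.1 hT).2
    have hUD : UPf W (DOWNf (W := W) T) = T := UP_DOWN (fun B hB => hTpart.2.1 B hB)
    rw [Finset.mem_filter]
    refine ⟨Finset.mem_univ _, ?_, ?_⟩
    · apply part_transfer.2
      rwa [hUD]
    · apply conn_transfer.2
      rwa [hUD]
  · intro τ hτ
    obtain ⟨hτpart, hτconn⟩ := (Finset.mem_filter.1 hτ).2
    rw [Finset.mem_filter]
    exact ⟨Finset.mem_univ _, part_transfer.1 hτpart, conn_transfer.1 hτconn⟩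
  · intro T hT
    obtain ⟨hTpart, _⟩ := (Finset.mem_filter.1 hT).2
    exact UP_DOWN (fun B hB => hTpart.2.1 B hB)
  · intro τ _
    exact DOWN_UP τ
  · intro T hT
    obtain ⟨hTpart, _⟩ := (Finset.mem_filter.1 hT).2
    have hUD : UPf W (DOWNf (W := W) T) = T := UP_DOWN (fun B hB => hTpart.2.1 B hB)
    conv_lhs => rw [← hUD]
    exact weight_up c


open scoped Classical in
noncomputable def ALLP (n : ℕ) : Finset (Finset (Finset (Fin n))) :=
  Finset.univ.filter IsPartitionOf

open scoped Classical in
noncomputable def NCP (n : ℕ) : Finset (Finset (Finset (Fin n))) :=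
  Finset.univ.filter (fun P => IsPartitionOf P ∧ IsNoncrossing P)

open scoped Classical in
noncomputable def CWset (W : Finset (Fin n)) : Finset (Finset (Finset (Fin n))) :=
  Finset.univ.filter (fun T : Finset (Finset (Fin n)) => PartOn W T ∧ ConnOn W T)

open scoped Classical in
lemma main_identity (c : ℕ → ℝ) (hn : 1 ≤ n) :
    ∑ π ∈ ALLP n, ∏ B ∈ π, c B.card = ∑ σ ∈ NCP n, ∏ W ∈ σ, kc c W.card := by
  have huniv : (Finset.univ : Finset (Fin n)).Nonempty := ⟨⟨0, hn⟩, Finset.mem_univ _⟩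
  -- rewrite each NC product as a sum over pi
  have step1 : ∀ σ ∈ NCP n, ∏ W ∈ σ, kc c W.card =
      ∑ p ∈ σ.pi (fun W => CWset W), ∏ x ∈ σ.attach, ∏ B ∈ p x.1 x.2, c B.card := by
    intro σ _
    rw [show (∏ W ∈ σ, kc c W.card) = ∏ W ∈ σ, ∑ T ∈ CWset W, ∏ B ∈ T, c B.card from
      Finset.prod_congr rfl fun W _ => by rw [← KW_eq_kc]; rfl]
    exact Finset.prod_sum σ _ _
  rw [Finset.sum_congr rfl step1, ← Finset.sum_sigma (NCP n) (fun σ => σ.pi fun W => CWset W)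
    (fun x => ∏ y ∈ x.1.attach, ∏ B ∈ x.2 y.1 y.2, c B.card)]
  -- now a bijection between ALLP n and the sigma set
  refine Finset.sum_bij'
    (fun π hπ => (⟨Classical.choose (exists_decomp
        (partOf_iff_partOn_univ.1 (Finset.mem_filter.1 hπ).2) huniv),
      fun W _ => res π W⟩ : Σ σ : Finset (Finset (Fin n)), ∀ W ∈ σ, Finset (Finset (Fin n))))
    (fun x _ => x.1.biUnion (fun W => if h : W ∈ x.1 then x.2 W h else ∅))
    ?_ ?_ ?_ ?_ ?_
  · -- hi : image is in sigma set
    intro π hπ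
    have hπP : PartOn Finset.univ π := partOf_iff_partOn_univ.1 (Finset.mem_filter.1 hπ).2
    obtain ⟨hσP, hσNC, href, hconn⟩ := Classical.choose_spec (exists_decomp hπP huniv)
    rw [Finset.mem_sigma]
    constructor
    · rw [NCP, Finset.mem_filter]
      exact ⟨Finset.mem_univ _, partOf_iff_partOn_univ.2 hσP, hσNC⟩
    · rw [Finset.mem_pi]
      intro W hW
      rw [CWset, Finset.mem_filter]
      exact ⟨Finset.mem_univ _, hπP.res_partOn hσP href hW, hconn W hW⟩
  · -- hj : glue is a partition
    rintro ⟨σ, p⟩ hx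
    rw [Finset.mem_sigma] at hx
    obtain ⟨hσ, hp⟩ := hx
    rw [NCP, Finset.mem_filter] at hσ
    have hσP : PartOn Finset.univ σ := partOf_iff_partOn_univ.1 hσ.2.1
    rw [Finset.mem_pi] at hp
    have hq : ∀ W ∈ σ, PartOn W ((fun W => if h : W ∈ σ then p W h else ∅) W) := by
      intro W hW
      simp only [dif_pos hW]
      have := hp W hW
      rw [CWset, Finset.mem_filter] at this
      exact this.2.1
    obtain ⟨hgP, _, _⟩ := glue_partOn hσP hq
    rw [ALLP, Finset.mem_filter]
    exact ⟨Finset.mem_univ _, partOf_iff_partOn_univ.2 hgP⟩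
  · -- left inverse : glue ∘ decompose = id
    intro π hπ
    have hπP : PartOn Finset.univ π := partOf_iff_partOn_univ.1 (Finset.mem_filter.1 hπ).2
    obtain ⟨hσP, hσNC, href, hconn⟩ := Classical.choose_spec (exists_decomp hπP huniv)
    simp only
    refine Eq.trans (Finset.biUnion_congr rfl ?_) (biUnion_res hπP href)
    exact fun W hW => dif_pos hW
  · -- right inverse : decompose ∘ glue = id
    rintro ⟨σ, p⟩ hx
    rw [Finset.mem_sigma] at hx
    obtain ⟨hσ, hp⟩ := hx
    rw [NCP, Finset.mem_filter] at hσ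
    have hσP : PartOn Finset.univ σ := partOf_iff_partOn_univ.1 hσ.2.1
    rw [Finset.mem_pi] at hp
    have hCW : ∀ W (hW : W ∈ σ), PartOn W (p W hW) ∧ ConnOn W (p W hW) := by
      intro W hW
      have := hp W hW
      rw [CWset, Finset.mem_filter] at this
      exact this.2
    have hq : ∀ W ∈ σ, PartOn W ((fun W => if h : W ∈ σ then p W h else ∅) W) := by
      intro W hW
      simp only [dif_pos hW]
      exact (hCW W hW).1
    obtain ⟨hgP, hgref, hgres⟩ := glue_partOn hσP hq
    set π := σ.biUnion (fun W => if h : W ∈ σ then p W h else ∅) with hπdef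
    simp only
    have hπmem : π ∈ ALLP n := by
      rw [ALLP, Finset.mem_filter]
      exact ⟨Finset.mem_univ _, partOf_iff_partOn_univ.2 hgP⟩
    obtain ⟨hσP', hσNC', href', hconn'⟩ :=
      Classical.choose_spec (exists_decomp (partOf_iff_partOn_univ.1
        (Finset.mem_filter.1 hπmem).2) huniv)
    have hconnσ : ∀ W ∈ σ, ConnOn W (res π W) := by
      intro W hW
      rw [hgres W hW]
      simp only [dif_pos hW]
      exact (hCW W hW).2
    have key : Classical.choose (exists_decomp (partOf_iff_partOn_univ.1
        (Finset.mem_filter.1 hπmem).2) huniv) = σ :=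
      decomp_unique hgP hσP' hσNC' href' hconn' hσP hσ.2.2 hgref hconnσ
    -- build the sigma equality
    exact sigma_helper key (fun W hW => (hgres W hW).trans (dif_pos hW))
  · -- weights agree
    intro π hπ
    have hπP : PartOn Finset.univ π := partOf_iff_partOn_univ.1 (Finset.mem_filter.1 hπ).2
    obtain ⟨hσP, hσNC, href, hconn⟩ := Classical.choose_spec (exists_decomp hπP huniv)
    set σ := Classical.choose (exists_decomp hπP huniv) with hσdef
    simp only
    have hdisj : ∀ W ∈ σ, ∀ W' ∈ σ, W ≠ W' → Disjoint (res π W) (res π W') := by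
      intro W hW W' hW' hne
      rw [Finset.disjoint_left]
      intro B hB hB'
      have hBne : B.Nonempty := hπP.1 B (mem_res.1 hB).1
      obtain ⟨i, hi⟩ := hBne
      exact hne (hσP.eq_of_mem hW hW' ((mem_res.1 hB).2 hi) ((mem_res.1 hB').2 hi))
    calc ∏ B ∈ π, c B.card
        = ∏ B ∈ σ.biUnion (fun W => res π W), c B.card := by rw [biUnion_res hπP href]
      _ = ∏ W ∈ σ, ∏ B ∈ res π W, c B.card := Finset.prod_biUnion hdisj
      _ = ∏ x ∈ σ.attach, ∏ B ∈ res π x.1, c B.card :=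
          (Finset.prod_attach σ (fun W => ∏ B ∈ res π W, c B.card)).symm


lemma finsum_filter_eq {α : Type*} [Fintype α] (p : α → Prop) [DecidablePred p]
    (f : α → ℝ) :
    ∑ᶠ x ∈ {y | p y}, f x = ∑ x ∈ Finset.univ.filter p, f x := by
  rw [← finsum_mem_coe_finset]
  congr 1
  ext x
  simp

lemma blocks_small {σ : Finset (Finset (Fin n))} (hσ : IsPartitionOf σ)
    (hne : σ ≠ {Finset.univ}) {W : Finset (Fin n)} (hW : W ∈ σ) : W.card < n := by
  have hle : W.card ≤ n := by
    have := Finset.card_le_card (Finset.subset_univ W)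
    simpa using this
  rcases lt_or_eq_of_le hle with h | h
  · exact h
  · exfalso
    apply hne
    have hWuniv : W = Finset.univ := Finset.eq_univ_of_card W (by simpa using h)
    subst hWuniv
    ext C
    rw [Finset.mem_singleton]
    constructor
    · intro hC
      obtain ⟨i, hi⟩ := hσ.1 C hC
      exact (partOf_iff_partOn_univ.1 hσ).eq_of_mem hC hW hi (Finset.mem_univ i)
    · rintro rfl
      exact hW

open scoped Classical in
lemma univ_partition_mem (hn : 1 ≤ n) : ({Finset.univ} : Finset (Finset (Fin n))) ∈ NCP n := by
  rw [NCP, Finset.mem_filter]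
  refine ⟨Finset.mem_univ _, ⟨?_, ?_⟩, ?_⟩
  · intro B hB
    rw [Finset.mem_singleton] at hB
    subst hB
    exact ⟨⟨0, hn⟩, Finset.mem_univ _⟩
  · intro i
    exact ⟨Finset.univ, ⟨Finset.mem_singleton_self _, Finset.mem_univ i⟩,
      fun C hC => Finset.mem_singleton.1 hC.1⟩
  · intro B hB C hC hne
    rw [Finset.mem_singleton] at hB hC
    exact absurd (hB.trans hC.symm) hne

end FreeConn


/-- If a sequence of moments `m_n` has classical cumulants `c_n` (moment–cumulant relation
over all partitions) and free cumulants `κ_n` (moment–cumulant relation over noncrossing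
partitions), then `κ_n = Σ_{π connected partition of [n]} Π_{V ∈ π} c_{|V|}`. -/
theorem free_cumulants_eq_sum_connected_classical (m c κ : ℕ → ℝ)
    (hc : ∀ n : ℕ, 1 ≤ n →
      m n = ∑ᶠ π ∈ {P : Finset (Finset (Fin n)) | IsPartitionOf P},
        ∏ B ∈ π, c B.card)
    (hκ : ∀ n : ℕ, 1 ≤ n →
      m n = ∑ᶠ π ∈ {P : Finset (Finset (Fin n)) | IsPartitionOf P ∧ IsNoncrossing P},
        ∏ B ∈ π, κ B.card) :
    ∀ n : ℕ, 1 ≤ n →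
      κ n = ∑ᶠ π ∈ {P : Finset (Finset (Fin n)) |
          IsPartitionOf P ∧ IsConnectedPartition P},
        ∏ B ∈ π, c B.card := by
  classical
  have key : ∀ n : ℕ, 1 ≤ n → κ n = FreeConn.kc c n := by
    intro n
    induction n using Nat.strong_induction_on with
    | _ n ih =>
      intro hn
      have hm1 : m n = ∑ π ∈ FreeConn.ALLP n, ∏ B ∈ π, c B.card := by
        rw [hc n hn, FreeConn.ALLP]
        exact FreeConn.finsum_filter_eq _ _
      have hm2 : m n = ∑ σ ∈ FreeConn.NCP n, ∏ B ∈ σ, κ B.card := by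
        rw [hκ n hn, FreeConn.NCP]
        exact FreeConn.finsum_filter_eq _ _
      have heq : ∑ σ ∈ FreeConn.NCP n, ∏ W ∈ σ, κ W.card =
          ∑ σ ∈ FreeConn.NCP n, ∏ W ∈ σ, FreeConn.kc c W.card := by
        rw [← hm2, hm1]
        exact FreeConn.main_identity c hn
      have hmem := FreeConn.univ_partition_mem (n := n) hn
      rw [← Finset.add_sum_erase _ _ hmem, ← Finset.add_sum_erase _ _ hmem] at heq
      have hrest : ∑ σ ∈ (FreeConn.NCP n).erase {Finset.univ}, ∏ W ∈ σ, κ W.card =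
          ∑ σ ∈ (FreeConn.NCP n).erase {Finset.univ}, ∏ W ∈ σ, FreeConn.kc c W.card := by
        refine Finset.sum_congr rfl fun σ hσ => Finset.prod_congr rfl fun W hW => ?_
        have hσ' := Finset.mem_erase.1 hσ
        have hσpart : IsPartitionOf σ := by
          have := (Finset.mem_filter.1 hσ'.2).2
          exact this.1
        have hlt : W.card < n := FreeConn.blocks_small hσpart hσ'.1 hW
        have hpos : 1 ≤ W.card := Finset.card_pos.2 (hσpart.1 W hW)
        rw [ih W.card hlt hpos]
      rw [hrest] at heq
      have hκn : (∏ W ∈ ({Finset.univ} : Finset (Finset (Fin n))), κ W.card) = κ n := by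
        rw [Finset.prod_singleton, Finset.card_univ, Fintype.card_fin]
      have hkcn : (∏ W ∈ ({Finset.univ} : Finset (Finset (Fin n))), FreeConn.kc c W.card)
          = FreeConn.kc c n := by
        rw [Finset.prod_singleton, Finset.card_univ, Fintype.card_fin]
      rw [hκn, hkcn] at heq
      exact add_right_cancel heq
  intro n hn
  rw [key n hn, FreeConn.kc]
  exact (FreeConn.finsum_filter_eq _ _).symm
end
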